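/- arXiv:0907.4317 — 2 statements merged into one kernel-verified Lean document; each statement's English description precedes it below -/
import Mathlib

section
/- Let X be a Banach space with a basis, let R be a tree of finite block sequences on X, and let F_R = {(min supp x_1, …, min supp x_k) : (x_1,…,x_k) ∈ R} be the associated tree of finite strictly increasing integer sequences. If both R and F_R are well-founded, then o(R) ≤ o(F_R). -/
noncomputable section

open Filter Topology

namespace HerL1

/-! ### Trees on a set and their derivatives -/

/-- A tree on `α`: a set of (nonempty) finite sequences closed under nonempty prefixes. -/
def IsTree {α : Type} (T : Set (List α)) : Prop :=
  ∀ l ∈ T, ∀ l' : List α, l' <+: l → l' ≠ [] → l' ∈ T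

/-- The derivative of a tree: members admitting a proper extension inside the tree. -/
def treeDeriv {α : Type} (T : Set (List α)) : Set (List α) :=
  {l | l ∈ T ∧ ∃ x : α, l ++ [x] ∈ T}

/-- Transfinite iteration of the tree derivative. -/
noncomputable def derivIter {α : Type} (T : Set (List α)) : Ordinal.{0} → Set (List α) :=
  WellFounded.fix wellFounded_lt fun o ih =>
    if o = 0 then T else ⋂ p : {β : Ordinal.{0} // β < o}, treeDeriv (ih p.1 p.2)

/-- A tree is well founded if it has no infinite branch. -/
def IsWellFoundedTree {α : Type} (T : Set (List α)) : Prop :=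
  ∀ f : ℕ → α, ∃ k : ℕ, (List.ofFn fun i : Fin (k + 1) => f i.1) ∉ T

/-- The order of a (well-founded) tree: the least ordinal whose derivative is empty. -/
noncomputable def treeOrder {α : Type} (T : Set (List α)) : Ordinal.{0} :=
  sInf {o | derivIter T o = ∅}

/-! ### Schreier families -/

/-- `F < G` for finite sets of naturals. -/
def SuccFinset (F G : Finset ℕ) : Prop := ∀ a ∈ F, ∀ b ∈ G, a < b

/-- A system of generalized Schreier families `(S_ξ)` defined by the usual transfinite
recursion, with some choice of cofinal sequences at limit ordinals. -/
structure SchreierSystem where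
  S : Ordinal.{0} → Set (Finset ℕ)
  zero_def : S 0 = {F | F = ∅ ∨ ∃ n : ℕ, F = {n}}
  succ_def : ∀ ξ : Ordinal.{0}, S (ξ + 1) =
    {F | ∃ (m : ℕ) (f : Fin m → Finset ℕ),
      (∀ i, f i ∈ S ξ) ∧
      (∀ i j : Fin m, i < j → SuccFinset (f i) (f j)) ∧
      (∀ a ∈ F, m ≤ a) ∧
      F = Finset.univ.biUnion f}
  limit_def : ∀ ξ : Ordinal.{0}, Order.IsSuccLimit ξ → ∃ seq : ℕ → Ordinal.{0},
    StrictMono seq ∧ (∀ n, seq n < ξ) ∧ (∀ β < ξ, ∃ n, β < seq n) ∧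
    S ξ = {F | ∃ n : ℕ, F ∈ S (seq n) ∧ ∀ a ∈ F, n ≤ a}

/-- Maximal member of a family of finite sets. -/
def IsMaximalIn (Sfam : Set (Finset ℕ)) (F : Finset ℕ) : Prop :=
  F ∈ Sfam ∧ ∀ G ∈ Sfam, F ⊆ G → G = F

/-- The first Schreier family (equivalently, admissible sets): `#F ≤ min F`. -/
def AdmissFam : Set (Finset ℕ) := {F | ∀ n ∈ F, F.card ≤ n}

/-! ### Schauder bases, block sequences -/

/-- A Schauder basis of a normed space: every vector has a unique expansion. -/
structure SchauderBasis (X : Type) [NormedAddCommGroup X] [NormedSpace ℝ X] where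
  e : ℕ → X
  expansion : ∀ x : X, ∃! a : ℕ → ℝ,
    Tendsto (fun N => ∑ i ∈ Finset.range N, a i • e i) atTop (𝓝 x)

variable {X : Type} [NormedAddCommGroup X] [NormedSpace ℝ X]

/-- The coordinates of a vector with respect to a Schauder basis. -/
noncomputable def SchauderBasis.coeff (b : SchauderBasis X) (x : X) : ℕ → ℝ :=
  (b.expansion x).exists.choose

/-- The support of a vector with respect to a Schauder basis. -/
def SchauderBasis.suppSet (b : SchauderBasis X) (x : X) : Set ℕ := {n | b.coeff x n ≠ 0}

/-- `min supp x`. -/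
noncomputable def SchauderBasis.minSupp (b : SchauderBasis X) (x : X) : ℕ := sInf (b.suppSet x)

/-- Finitely supported vector. -/
def SchauderBasis.FinSupp (b : SchauderBasis X) (x : X) : Prop := (b.suppSet x).Finite

/-- `x < y`: the support of `x` lies entirely before the support of `y`. -/
def SchauderBasis.Before (b : SchauderBasis X) (x y : X) : Prop :=
  ∃ N : ℕ, (∀ n ∈ b.suppSet x, n ≤ N) ∧ ∀ n ∈ b.suppSet y, N < n

/-- A block vector: nonzero and finitely supported. -/
def SchauderBasis.IsBlockVector (b : SchauderBasis X) (x : X) : Prop :=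
  x ≠ 0 ∧ b.FinSupp x

/-- An infinite block sequence. -/
def SchauderBasis.IsBlockSeq (b : SchauderBasis X) (u : ℕ → X) : Prop :=
  (∀ n, b.IsBlockVector (u n)) ∧ ∀ n, b.Before (u n) (u (n + 1))

/-! ### Equivalence with the unit bases of `ℓ1^k`, `ℓ∞^k`, `ℓp^k` -/

/-- A finite sequence of normalized vectors `C`-equivalent to the unit basis of `ℓ1^k`. -/
def IsL1SeqWith (C : ℝ) (l : List X) : Prop :=
  (∀ x ∈ l, ‖x‖ = 1) ∧
  ∀ a : Fin l.length → ℝ,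
    (1 / C) * (∑ i, |a i|) ≤ ‖∑ i, a i • l.get i‖ ∧
    ‖∑ i, a i • l.get i‖ ≤ C * ∑ i, |a i|

/-- A finite sequence of normalized vectors `C`-equivalent to the unit basis of `ℓ∞^k`. -/
def IsC0SeqWith (C : ℝ) (l : List X) : Prop :=
  (∀ x ∈ l, ‖x‖ = 1) ∧
  ∀ a : Fin l.length → ℝ,
    (∀ i, (1 / C) * |a i| ≤ ‖∑ j, a j • l.get j‖) ∧
    ∀ bd : ℝ, 0 ≤ bd → (∀ i, |a i| ≤ bd) → ‖∑ j, a j • l.get j‖ ≤ C * bd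

/-- An `ℓ1`-tree with constant `C`. -/
def IsL1Tree (C : ℝ) (T : Set (List X)) : Prop :=
  IsTree T ∧ ∀ l ∈ T, IsL1SeqWith C l

/-- A `c0`-tree with constant `C`. -/
def IsC0Tree (C : ℝ) (T : Set (List X)) : Prop :=
  IsTree T ∧ ∀ l ∈ T, IsC0SeqWith C l

/-- A block `ℓ1`-tree with constant `C`, all of whose entries lie in `Y`. -/
def IsBlockL1TreeIn (b : SchauderBasis X) (Y : Set X) (C : ℝ) (T : Set (List X)) : Prop :=
  IsL1Tree C T ∧ ∀ l ∈ T, (∀ x ∈ l, x ∈ Y ∧ b.IsBlockVector x) ∧ l.Chain' b.Before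

/-- The block Bourgain `ℓ1`-index: supremum of orders of well-founded block `ℓ1`-trees. -/
noncomputable def blockL1Index (b : SchauderBasis X) : Ordinal.{0} :=
  sSup {o | ∃ C : ℝ, 1 ≤ C ∧ ∃ T : Set (List X),
    IsBlockL1TreeIn b Set.univ C T ∧ IsWellFoundedTree T ∧ o = treeOrder T}

/-! ### Spreading models -/

/-- `(x_i)` generates an `ℓ1`-spreading model with constant `C` over the family `A`. -/
def GeneratesL1SM (x : ℕ → X) (C : ℝ) (A : Set (Finset ℕ)) : Prop :=
  ∀ F ∈ A, ∀ a : ℕ → ℝ,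
    (1 / C) * (∑ i ∈ F, |a i|) ≤ ‖∑ i ∈ F, a i • x i‖ ∧
    ‖∑ i ∈ F, a i • x i‖ ≤ C * ∑ i ∈ F, |a i|

/-- `(x_i)` generates a `c0`-spreading model with constant `C` over the family `A`. -/
def GeneratesC0SM (x : ℕ → X) (C : ℝ) (A : Set (Finset ℕ)) : Prop :=
  ∀ F ∈ A, ∀ a : ℕ → ℝ,
    (∀ i ∈ F, (1 / C) * |a i| ≤ ‖∑ j ∈ F, a j • x j‖) ∧
    ∀ bd : ℝ, 0 ≤ bd → (∀ i ∈ F, |a i| ≤ bd) → ‖∑ j ∈ F, a j • x j‖ ≤ C * bd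

/-- `(x_i)` generates an `ℓp`-spreading model with constant `C` over the family `A`. -/
def GeneratesLpSM (p : ℝ) (x : ℕ → X) (C : ℝ) (A : Set (Finset ℕ)) : Prop :=
  ∀ F ∈ A, ∀ a : ℕ → ℝ,
    (1 / C) * (∑ i ∈ F, |a i| ^ p) ^ (1 / p) ≤ ‖∑ i ∈ F, a i • x i‖ ∧
    ‖∑ i ∈ F, a i • x i‖ ≤ C * (∑ i ∈ F, |a i| ^ p) ^ (1 / p)

/-- A basic sequence (with some basis constant `K`). -/
def IsBasicSeq (x : ℕ → X) : Prop :=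
  ∃ K : ℝ, 1 ≤ K ∧ ∀ (a : ℕ → ℝ) (n m : ℕ), n ≤ m →
    ‖∑ i ∈ Finset.range n, a i • x i‖ ≤ K * ‖∑ i ∈ Finset.range m, a i • x i‖

/-! ### The Schreier games -/

/-- Validity of the responses of player V: normalized successive block vectors. -/
def ValidResponses (b : SchauderBasis X) (resp : ℕ → X) : Prop :=
  (∀ i, ‖resp i‖ = 1 ∧ b.IsBlockVector (resp i)) ∧ ∀ i, b.Before (resp i) (resp (i + 1))

/-- Player V has a winning strategy, with constant `C`, in the `S`-game played inside `Y`,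
where player S chooses block subspaces (given by block sequences with entries in `Y`)
and V answers with normalized block vectors of the subspace chosen by S;
V wins when the responses form a maximal `S`-admissible sequence `C`-equivalent to
the unit basis of `ℓ1^k`. -/
def VWinsBlockGameIn (b : SchauderBasis X) (Y : Set X) (Sfam : Set (Finset ℕ)) (C : ℝ) :
    Prop :=
  ∃ strat : List (ℕ → X) → X,
    ∀ moves : ℕ → ℕ → X,
      (∀ i, b.IsBlockSeq (moves i) ∧ ∀ n, moves i n ∈ Y) →
      (ValidResponses b (fun i => strat (List.ofFn fun j : Fin (i + 1) => moves j.1)) ∧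
       (∀ i, strat (List.ofFn fun j : Fin (i + 1) => moves j.1) ∈
          closure (Submodule.span ℝ (Set.range (moves i)) : Set X)) ∧
       ∃ k : ℕ,
         IsMaximalIn Sfam
           (Finset.image
             (fun i : Fin (k + 1) =>
               b.minSupp (strat (List.ofFn fun j : Fin (i.1 + 1) => moves j.1)))
             Finset.univ) ∧
         IsL1SeqWith C (List.ofFn fun i : Fin (k + 1) =>
           strat (List.ofFn fun j : Fin (i.1 + 1) => moves j.1)))

/-- The tail-subspace version of the game: player S only chooses tail subspaces. -/
def VWinsTailGame (b : SchauderBasis X) (Sfam : Set (Finset ℕ)) (C : ℝ) : Prop :=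
  ∃ strat : List ℕ → X,
    ∀ moves : ℕ → ℕ,
      (ValidResponses b (fun i => strat (List.ofFn fun j : Fin (i + 1) => moves j.1)) ∧
       (∀ i, ∀ n ∈ b.suppSet (strat (List.ofFn fun j : Fin (i + 1) => moves j.1)),
          moves i ≤ n) ∧
       ∃ k : ℕ,
         IsMaximalIn Sfam
           (Finset.image
             (fun i : Fin (k + 1) =>
               b.minSupp (strat (List.ofFn fun j : Fin (i.1 + 1) => moves j.1)))
             Finset.univ) ∧
         IsL1SeqWith C (List.ofFn fun i : Fin (k + 1) =>
           strat (List.ofFn fun j : Fin (i.1 + 1) => moves j.1)))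


/-! ### `c00` machinery -/

/-- Finitely supported real sequences (`c00`), used both for vectors and functionals. -/
abbrev Func := ℕ →₀ ℝ

/-- Action of a functional `φ` on a vector `x`. -/
def dot (φ x : Func) : ℝ := φ.sum fun n a => a * x n

/-- The norm induced on `c00` by a norming set `G`. -/
noncomputable def gNorm (G : Set Func) (x : Func) : ℝ := sSup ((fun φ => dot φ x) '' G)

/-- Successive supports. -/
def SuccSupp (f g : Func) : Prop := ∀ a ∈ f.support, ∀ b ∈ g.support, a < b

/-- Restriction of a functional to a set (used with intervals) of coordinates. -/
noncomputable def restrictTo (E : Set ℕ) (g : Func) : Func :=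
  haveI := Classical.decPred fun n => n ∈ E
  g.filter fun n => n ∈ E

/-- All coordinates rational. -/
def RationalCoeffs (g : Func) : Prop := ∀ n, ∃ q : ℚ, g n = (q : ℝ)

/-- `min supp g`. -/
def minsupp (g : Func) : ℕ := sInf {n | g n ≠ 0}

/-- `max supp g`. -/
def maxsupp (g : Func) : ℕ := g.support.sup id

/-- The sequence `m_j` : `m_1 = 2^5`, `m_{j+1} = m_j^5`. -/
def mseq (j : ℕ) : ℕ := 2 ^ 5 ^ j

/-- The sequence `n_j` : `n_1 = 2^6`, `n_{j+1} = (2 n_j)^{s_j}` where `2^{s_j} = m_{j+1}^3`. -/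
def nseq : ℕ → ℕ
  | 0 => 1
  | 1 => 2 ^ 6
  | (j + 2) => (2 * nseq (j + 1)) ^ (3 * 5 ^ (j + 2))

/-! ### The ground set `G_ξ` -/

/-- `G_0 = {± e_n^*}`. -/
def G0 : Set Func := {φ | ∃ n : ℕ, φ = Finsupp.single n 1 ∨ φ = -Finsupp.single n 1}

/-- `G_1^j`: functionals `m_{2j-1}^{-2} Σ_{k ∈ B} ± e_k^*` with `#B ≤ n_{2j-1}`. -/
def G1set (j : ℕ) : Set Func :=
  {φ | ∃ (B : Finset ℕ) (ε : ℕ → ℝ), B.card ≤ nseq (2 * j - 1) ∧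
    (∀ k, ε k = 1 ∨ ε k = -1) ∧
    φ = ((mseq (2 * j - 1) : ℝ) ^ 2)⁻¹ • ∑ k ∈ B, ε k • Finsupp.single k 1}

/-- `G_1 = ∪_j G_1^j`. -/
def G1all : Set Func := {φ | ∃ j : ℕ, 1 ≤ j ∧ φ ∈ G1set j}

/-- The domain `𝒰` of the coding function `σ₁`. -/
def InU (l : List Func) : Prop :=
  ∃ (d : ℕ) (f : Fin d → Func) (j : Fin d → ℕ),
    l = List.ofFn f ∧ StrictMono j ∧ (∀ i, 1 ≤ j i ∧ f i ∈ G1set (j i)) ∧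
    ∀ i₁ i₂ : Fin d, i₁ < i₂ → SuccSupp (f i₁) (f i₂)

/-- The data used to define `G_ξ`: the partition `ℕ = M₁ ∪ M₂` and the coding `σ₁`. -/
structure CodingOne where
  M₁ : Set ℕ
  M₂ : Set ℕ
  disj : Disjoint M₁ M₂
  union : M₁ ∪ M₂ = Set.univ
  inf₁ : M₁.Infinite
  inf₂ : M₂.Infinite
  σ₁ : List Func → ℕ
  mem_M₂ : ∀ l, InU l → σ₁ l ∈ M₂
  inj : ∀ l l', InU l → InU l' → σ₁ l = σ₁ l' → l = l'
  mono : ∀ l f, InU (l ++ [f]) → σ₁ l < σ₁ (l ++ [f])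

/-- A `σ₁`-special sequence `(f_1, …, f_d)` with index sequence `j`. -/
def IsSpecialSeq (Sch : SchreierSystem) (ξ : Ordinal.{0}) (cd : CodingOne)
    (d : ℕ) (f : Fin d → Func) (j : Fin d → ℕ) : Prop :=
  StrictMono j ∧
  (∀ i, 1 ≤ j i ∧ f i ∈ G1set (j i) ∧ (f i).support.Nonempty) ∧
  (∀ i₁ i₂ : Fin d, i₁ < i₂ → SuccSupp (f i₁) (f i₂)) ∧
  Finset.image (fun i => minsupp (f i)) Finset.univ ∈ Sch.S ξ ∧
  (∀ h : 0 < d, j ⟨0, h⟩ ∈ cd.M₁) ∧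
  ∀ (i : ℕ) (h : i + 1 < d),
    j ⟨i + 1, h⟩ = cd.σ₁ (List.ofFn fun t : Fin (i + 1) => f ⟨t.1, lt_trans t.2 h⟩)

/-- Elements of `G_sp` together with their index set. -/
def GspInd (Sch : SchreierSystem) (ξ : Ordinal.{0}) (cd : CodingOne)
    (φ : Func) (I : Set ℕ) : Prop :=
  ∃ (d : ℕ) (f : Fin d → Func) (j : Fin d → ℕ) (ε : Fin d → ℝ) (E : Set ℕ),
    IsSpecialSeq Sch ξ cd d f j ∧ (∀ i, ε i = 1 ∨ ε i = -1) ∧ E.OrdConnected ∧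
    φ = ∑ i, restrictTo E (ε i • f i) ∧
    I = {m | ∃ i, j i = m ∧ restrictTo E (f i) ≠ 0}

/-- `G_sp`: the `G_ξ`-special functionals. -/
def Gsp (Sch : SchreierSystem) (ξ : Ordinal.{0}) (cd : CodingOne) : Set Func :=
  {φ | ∃ I, GspInd Sch ξ cd φ I}

/-- A member of `G_sp ∪ G_1` together with its index set. -/
def WeightedInd (Sch : SchreierSystem) (ξ : Ordinal.{0}) (cd : CodingOne)
    (φ : Func) (I : Set ℕ) : Prop :=
  (∃ j : ℕ, 1 ≤ j ∧ φ ∈ G1set j ∧ I = {j}) ∨ GspInd Sch ξ cd φ I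

/-- `G_{ℓ2}`: `ℓ2`-convex combinations of elements of `G_sp ∪ G_1` with pairwise
disjoint index sets. -/
def Gl2 (Sch : SchreierSystem) (ξ : Ordinal.{0}) (cd : CodingOne) : Set Func :=
  {φ | ∃ (d : ℕ) (ψ : Fin d → Func) (I : Fin d → Set ℕ) (a : Fin d → ℝ),
    (∑ i, a i ^ 2) ≤ 1 ∧ (∀ i, WeightedInd Sch ξ cd (ψ i) (I i)) ∧
    (∀ i₁ i₂ : Fin d, i₁ ≠ i₂ → Disjoint (I i₁) (I i₂)) ∧
    φ = ∑ i, a i • ψ i}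

/-- The ground set `G_ξ = G_0 ∪ G_1 ∪ G_sp ∪ G_{ℓ2}`. -/
def Gxi (Sch : SchreierSystem) (ξ : Ordinal.{0}) (cd : CodingOne) : Set Func :=
  G0 ∪ G1all ∪ Gsp Sch ξ cd ∪ Gl2 Sch ξ cd

/-- The set `G'_ξ = G_0 ∪ G_1 ∪ G_sp ∪ {0}`. -/
def Gxi' (Sch : SchreierSystem) (ξ : Ordinal.{0}) (cd : CodingOne) : Set Func :=
  G0 ∪ G1all ∪ Gsp Sch ξ cd ∪ {0}

/-! ### Completions -/

/-- `T` realizes the Banach space `X` as the completion of `c00` under the norm `Nrm`. -/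
def IsCompletionOf (Nrm : Func → ℝ) (X : Type) [NormedAddCommGroup X] [NormedSpace ℝ X]
    (T : Func →ₗ[ℝ] X) : Prop :=
  (∀ v : Func, ‖T v‖ = Nrm v) ∧ DenseRange T

/-- Bundled version of a completion of `(c00, Nrm)`. -/
structure CompletionOf (Nrm : Func → ℝ) where
  carrier : Type
  [grp : NormedAddCommGroup carrier]
  [mod : NormedSpace ℝ carrier]
  [cpl : CompleteSpace carrier]
  T : Func →ₗ[ℝ] carrier
  isom : ∀ v, ‖T v‖ = Nrm v
  dense : DenseRange T

/-! ### The norming set `K_ξ` of the space `X_ξ` -/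

/-- Finite block sequences of nonzero rational functionals (the domain `ℚ_s` of `σ`). -/
def IsRatBlock (l : List Func) : Prop :=
  (∀ g ∈ l, g ≠ 0 ∧ RationalCoeffs g) ∧ l.Chain' SuccSupp

/-- The data for `K_ξ`: a partition `(Λ_i)` of `ℕ` into infinite sets, a partition
`ℕ = N₁ ∪ N₂` and the coding function `σ` with its growth property. -/
structure CodingTwo where
  Λ : ℕ → Set ℕ
  Λdisj : ∀ i j, i ≠ j → Disjoint (Λ i) (Λ j)
  Λinf : ∀ i, (Λ i).Infinite
  Λcover : (⋃ i, Λ i) = Set.univ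
  N₁ : Set ℕ
  N₂ : Set ℕ
  Ndisj : Disjoint N₁ N₂
  Nunion : N₁ ∪ N₂ = Set.univ
  σ : List Func → ℕ
  σ_mem : ∀ l, IsRatBlock l → σ l ∈ N₂
  σ_inj : ∀ l l', IsRatBlock l → IsRatBlock l' → σ l = σ l' → l = l'
  σ_growth : ∀ l, IsRatBlock l → ∀ g ∈ l, ∀ t ∈ g.support, ∀ gl, l.getLast? = some gl →
    (maxsupp gl : ℝ) * |g t|⁻¹ < Real.sqrt (mseq (2 * σ l))

/-- `g` is the result of an `(A_N, θ)`-operation on functionals from `W`. -/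
def IsAOp (W : Set Func) (N : ℕ) (θ : ℝ) (g : Func) : Prop :=
  ∃ (d : ℕ) (f : Fin d → Func), 0 < d ∧ d ≤ N ∧ (∀ i, f i ∈ W) ∧
    (∀ i₁ i₂ : Fin d, i₁ < i₂ → SuccSupp (f i₁) (f i₂)) ∧ g = θ • ∑ i, f i

/-- An `n_{2j-1}`-attractor sequence relative to the set `W`. -/
def IsAttractorSeq (cd₂ : CodingTwo) (W : Set Func) (j d : ℕ) (f : Fin d → Func) : Prop :=
  1 ≤ j ∧ d ≤ nseq (2 * j - 1) ∧ (∀ i, f i ∈ W) ∧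
  (∀ i, f i ≠ 0 ∧ RationalCoeffs (f i)) ∧
  (∀ i₁ i₂ : Fin d, i₁ < i₂ → SuccSupp (f i₁) (f i₂)) ∧
  (∀ h : 0 < d, ∃ j₁ : ℕ, j₁ ∈ cd₂.N₁ ∧ nseq (2 * j - 1) ^ 3 < mseq (2 * j₁) ∧
    IsAOp W (nseq (2 * j₁)) ((mseq (2 * j₁) : ℝ))⁻¹ (f ⟨0, h⟩)) ∧
  (∀ (k : ℕ) (h : 2 * k < d), 0 < k →
    IsAOp W (nseq (2 * cd₂.σ (List.ofFn fun t : Fin (2 * k) => f ⟨t.1, lt_trans t.2 h⟩)))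
      ((mseq (2 * cd₂.σ (List.ofFn fun t : Fin (2 * k) => f ⟨t.1, lt_trans t.2 h⟩)) : ℝ))⁻¹
      (f ⟨2 * k, h⟩)) ∧
  (∀ (k : ℕ) (h : 2 * k + 1 < d), ∃ lam : ℕ,
    lam ∈ cd₂.Λ (cd₂.σ (List.ofFn fun t : Fin (2 * k + 1) => f ⟨t.1, lt_trans t.2 h⟩)) ∧
    f ⟨2 * k + 1, h⟩ = Finsupp.single lam 1)

/-- Symmetric set of functionals. -/
def SymmClosed (W : Set Func) : Prop := ∀ f ∈ W, -f ∈ W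

/-- Closed under restrictions to intervals. -/
def IntervalClosed (W : Set Func) : Prop :=
  ∀ f ∈ W, ∀ E : Set ℕ, E.OrdConnected → restrictTo E f ∈ W

/-- Rationally convex. -/
def RatConvex (W : Set Func) : Prop :=
  ∀ (d : ℕ) (g : Fin d → Func) (r : Fin d → ℚ), (∀ i, g i ∈ W) → (∀ i, 0 ≤ r i) →
    (∑ i, r i) = 1 → (∑ i, (r i : ℝ) • g i) ∈ W

/-- Closed under rational `ℓ2`-convex combinations of weighted functionals
(results of `(A_{n_{j_i}}, m_{j_i}^{-1})`-operations with pairwise distinct `n_{j_i}`). -/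
def L2ComboClosed (W : Set Func) : Prop :=
  ∀ (d : ℕ) (g : Fin d → Func) (jj : Fin d → ℕ) (lam : Fin d → ℚ),
    (∀ i, g i ∈ W ∧ IsAOp W (nseq (jj i)) ((mseq (jj i) : ℝ))⁻¹ (g i)) →
    (∀ i₁ i₂ : Fin d, i₁ ≠ i₂ → nseq (jj i₁) ≠ nseq (jj i₂)) →
    (∑ i, (lam i : ℝ) ^ 2) ≤ 1 → (∑ i, (lam i : ℝ) • g i) ∈ W

/-- The closure properties defining `K_ξ`. -/
def KClosed (Sch : SchreierSystem) (ξ : Ordinal.{0}) (cd₁ : CodingOne) (cd₂ : CodingTwo)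
    (W : Set Func) : Prop :=
  Gxi Sch ξ cd₁ ⊆ W ∧ SymmClosed W ∧ IntervalClosed W ∧
  (∀ j : ℕ, 1 ≤ j → ∀ g, IsAOp W (nseq (2 * j)) ((mseq (2 * j) : ℝ))⁻¹ g → g ∈ W) ∧
  (∀ (j d : ℕ) (f : Fin d → Func), IsAttractorSeq cd₂ W j d f →
    (((mseq (2 * j - 1) : ℝ))⁻¹ • ∑ i, f i) ∈ W) ∧
  L2ComboClosed W ∧ RatConvex W

/-- The norming set `K_ξ` : the minimal subset of `c00` with the above closure properties. -/
def Kxi (Sch : SchreierSystem) (ξ : Ordinal.{0}) (cd₁ : CodingOne) (cd₂ : CodingTwo) :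
    Set Func :=
  ⋂₀ {W | KClosed Sch ξ cd₁ cd₂ W}

/-! ### General ground sets and mixed Tsirelson extensions -/

/-- A ground set. -/
def IsGroundSet (G : Set Func) : Prop :=
  SymmClosed G ∧ (∀ n : ℕ, Finsupp.single n 1 ∈ G) ∧
  (∀ f ∈ G, (∀ n, |f n| ≤ 1) ∧ RationalCoeffs f) ∧ IntervalClosed G

/-- The closure properties defining `W_G`. -/
def WClosed (G : Set Func) (W : Set Func) : Prop :=
  G ⊆ W ∧ SymmClosed W ∧ IntervalClosed W ∧
  (∀ j : ℕ, 1 ≤ j → ∀ g, IsAOp W (nseq j) ((mseq j : ℝ))⁻¹ g → g ∈ W) ∧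
  L2ComboClosed W ∧ RatConvex W

/-- `W_G`: the smallest subset of `c00` with the above closure properties. -/
def WGset (G : Set Func) : Set Func := ⋂₀ {W | WClosed G W}

/-- An extension `D_G ⊆ W_G` of the ground set `G`. -/
def IsExtension (G D : Set Func) : Prop :=
  D ⊆ WGset G ∧ G ⊆ D ∧ SymmClosed D ∧ IntervalClosed D ∧
  (∀ j : ℕ, 1 ≤ j → ∀ g, IsAOp D (nseq (2 * j)) ((mseq (2 * j) : ℝ))⁻¹ g → g ∈ D) ∧
  L2ComboClosed D ∧ RatConvex D

/-! ### Shrinking and boundedly complete bases -/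

variable {X : Type} [NormedAddCommGroup X] [NormedSpace ℝ X]

/-- A Schauder basis is shrinking: the norms of the restrictions of any functional to the
tail subspaces tend to `0`. -/
def SchauderBasis.Shrinking (b : SchauderBasis X) : Prop :=
  ∀ f : X →L[ℝ] ℝ,
    Tendsto (fun n => sSup {r : ℝ |
        ∃ x ∈ closure (Submodule.span ℝ (b.e '' {m | n ≤ m}) : Set X), ‖x‖ ≤ 1 ∧ r = |f x|})
      atTop (𝓝 0)

/-- A Schauder basis is boundedly complete: bounded partial sums converge. -/
def SchauderBasis.BoundedlyComplete (b : SchauderBasis X) : Prop :=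
  ∀ a : ℕ → ℝ, (∃ M : ℝ, ∀ n, ‖∑ i ∈ Finset.range n, a i • b.e i‖ ≤ M) →
    ∃ x : X, Tendsto (fun n => ∑ i ∈ Finset.range n, a i • b.e i) atTop (𝓝 x)

/-! ### The space `(⊕_n ℓ1^n)_{ℓ2}` -/

instance : Fact ((1 : ENNReal) ≤ 2) := ⟨by norm_num⟩

/-- The `ℓ2`-direct sum of the spaces `ℓ1^n`, `n ≥ 1`. -/
abbrev X4 : Type := lp (fun n : ℕ => PiLp 1 fun _ : Fin (n + 1) => ℝ) 2

/-- The `j`-th unit vector of `ℓ1^{n+1}`. -/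
noncomputable def unitVec (n : ℕ) (j : Fin (n + 1)) : PiLp 1 fun _ : Fin (n + 1) => ℝ :=
  (WithLp.equiv 1 (∀ _ : Fin (n + 1), ℝ)).symm (Pi.single j 1)

/-- The canonical basis vectors of `(⊕_n ℓ1^n)_{ℓ2}`. -/
noncomputable def basisVec (q : Σ n : ℕ, Fin (n + 1)) : X4 :=
  lp.single 2 q.1 (unitVec q.1 q.2)

/-- The (strict) lexicographic order on the index set `Σ n, Fin (n+1)`. -/
def SigmaLexLt (q q' : Σ n : ℕ, Fin (n + 1)) : Prop :=
  q.1 < q'.1 ∨ (q.1 = q'.1 ∧ q.2.1 < q'.2.1)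

/-! ### Bundled Banach spaces -/

/-- A Banach space together with a Schauder basis. -/
structure BanachWithBasis where
  carrier : Type
  [grp : NormedAddCommGroup carrier]
  [mod : NormedSpace ℝ carrier]
  [cpl : CompleteSpace carrier]
  basis : SchauderBasis carrier

/-- A bundled Banach space. -/
structure BanachSpaceObj where
  carrier : Type
  [grp : NormedAddCommGroup carrier]
  [mod : NormedSpace ℝ carrier]
  [cpl : CompleteSpace carrier]


section AuxDeriv
-- auxiliary lemmas

variable {α β : Type}

lemma derivIter_def (T : Set (List α)) (o : Ordinal.{0}) :
    derivIter T o =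
      if o = 0 then T else ⋂ p : {β : Ordinal.{0} // β < o}, treeDeriv (derivIter T p.1) := by
  rw [derivIter, WellFounded.fix_eq]

lemma derivIter_zero (T : Set (List α)) : derivIter T 0 = T := by
  rw [derivIter_def]; simp

lemma derivIter_of_ne (T : Set (List α)) {o : Ordinal.{0}} (h : o ≠ 0) :
    derivIter T o = ⋂ p : {β : Ordinal.{0} // β < o}, treeDeriv (derivIter T p.1) := by
  rw [derivIter_def]; simp [h]

lemma treeDeriv_subset (T : Set (List α)) : treeDeriv T ⊆ T := fun _ h => h.1

lemma treeDeriv_mono {S T : Set (List α)} (h : S ⊆ T) : treeDeriv S ⊆ treeDeriv T :=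
  fun l hl => ⟨h hl.1, hl.2.imp fun _ hx => h hx⟩

lemma derivIter_antitone (T : Set (List α)) {β o : Ordinal.{0}} (h : β ≤ o) :
    derivIter T o ⊆ derivIter T β := by
  rcases eq_or_lt_of_le h with rfl | h
  · exact subset_rfl
  · have ho : o ≠ 0 := fun h0 => (h0 ▸ h : β < 0).not_ge (zero_le (a := β))
    rw [derivIter_of_ne T ho]
    exact (Set.iInter_subset
      (fun p : {γ : Ordinal.{0} // γ < o} => treeDeriv (derivIter T p.1))
      ⟨β, h⟩).trans (treeDeriv_subset _)

lemma derivIter_succ (T : Set (List α)) (o : Ordinal.{0}) :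
    derivIter T (o + 1) = treeDeriv (derivIter T o) := by
  rw [derivIter_of_ne T (by exact (Order.succ_ne_bot o : o + 1 ≠ 0))]
  apply subset_antisymm
  · exact Set.iInter_subset
      (fun p : {γ : Ordinal.{0} // γ < o + 1} => treeDeriv (derivIter T p.1))
      ⟨o, Order.lt_succ o⟩
  · refine Set.subset_iInter fun p => treeDeriv_mono (derivIter_antitone T ?_)
    exact Order.le_of_lt_succ p.2

lemma map_mem_derivIter (f : α → β) (R : Set (List α)) (o : Ordinal.{0}) :
    ∀ l ∈ derivIter R o, l.map f ∈ derivIter {l | ∃ r ∈ R, l = r.map f} o := by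
  induction o using Ordinal.induction with
  | h o IH =>
    intro l hl
    rcases eq_or_ne o 0 with rfl | ho
    · rw [derivIter_zero] at hl ⊢
      exact ⟨l, hl, rfl⟩
    · rw [derivIter_of_ne _ ho] at hl ⊢
      refine Set.mem_iInter.2 fun p => ?_
      have hp := Set.mem_iInter.1 hl p
      obtain ⟨hl', x, hx⟩ := hp
      refine ⟨IH p.1 p.2 l hl', f x, ?_⟩
      have := IH p.1 p.2 _ hx
      simpa using this

lemma exists_deriv_fixed (T : Set (List α)) :
    ∃ o : Ordinal.{0}, derivIter T (o + 1) = derivIter T o := by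
  by_contra h
  push_neg at h
  have hinj : Function.Injective (derivIter T) := by
    intro o₁ o₂ he
    by_contra hne
    wlog hlt : o₁ < o₂ generalizing o₁ o₂
    · exact this he.symm (Ne.symm hne) ((Ne.symm hne).lt_of_le (not_lt.1 hlt))
    have h1 : derivIter T o₂ ⊆ derivIter T (o₁ + 1) :=
      derivIter_antitone T (Order.add_one_le_iff.mpr hlt)
    have h2 : derivIter T (o₁ + 1) ⊆ derivIter T o₁ := by
      rw [derivIter_succ]; exact treeDeriv_subset _
    exact h o₁ (subset_antisymm h2 (he ▸ h1))
  exact not_injective_of_ordinal _ hinj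

lemma no_branch {T S : Set (List α)} (hT : IsTree T) (hST : S ⊆ T)
    (hS : ∀ l ∈ S, ∃ x : α, l ++ [x] ∈ S) (hne : S.Nonempty) :
    ¬ IsWellFoundedTree T := by
  intro hwf
  obtain ⟨l₀, hl₀⟩ := hne
  -- chain of extensions
  let c : ℕ → {l : List α // l ∈ S} := fun n =>
    Nat.rec ⟨l₀, hl₀⟩ (fun _ p => ⟨p.1 ++ [Classical.choose (hS p.1 p.2)],
      Classical.choose_spec (hS p.1 p.2)⟩) n
  have hstep : ∀ n, ((c n).1 : List α) <+: (c (n+1)).1 := fun n => ⟨_, rfl⟩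
  have hlen : ∀ n, (c n).1.length = l₀.length + n := by
    intro n; induction n with
    | zero => rfl
    | succ n ih =>
      have hrec : ((c (n+1)).1 : List α)
          = (c n).1 ++ [Classical.choose (hS (c n).1 (c n).2)] := rfl
      rw [hrec, List.length_append, ih]
      simp
      omega
  have hmono : ∀ m n, m ≤ n → ((c m).1 : List α) <+: (c n).1 := by
    intro m n
    induction n with
    | zero =>
      intro hmn
      have : m = 0 := Nat.le_zero.mp hmn
      subst this; exact List.prefix_rfl
    | succ n ih =>
      intro hmn
      rcases Nat.lt_or_ge m (n+1) with h | h
      · exact (ih (by omega)).trans (hstep n)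
      · have : m = n + 1 := by omega
        subst this; exact List.prefix_rfl
  have x₀ : α := Classical.choose (hS l₀ hl₀)
  let f : ℕ → α := fun i => (c (i+1)).1.getD i x₀
  obtain ⟨k, hk⟩ := hwf f
  apply hk
  have hlenk : k + 1 ≤ (c (k+1)).1.length := by have := hlen (k+1); omega
  have heq : (List.ofFn fun i : Fin (k + 1) => f i.1) = (c (k+1)).1.take (k+1) := by
    apply List.ext_getElem
    · simp only [List.length_ofFn, List.length_take]
      exact (Nat.min_eq_left hlenk).symm
    · intro i h1 h2
      rw [List.getElem_ofFn, List.getElem_take]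
      have hi : i < k + 1 := by simpa using h1
      have hlen_i : i < (c (i+1)).1.length := by have := hlen (i+1); omega
      have hpre := hmono (i+1) (k+1) (by omega)
      show (c (i+1)).1.getD i x₀ = _
      rw [List.getD_eq_getElem _ _ hlen_i]
      exact hpre.getElem hlen_i
  rw [heq]
  refine hT _ (hST (c (k+1)).2) _ (List.take_prefix _ _) ?_
  intro hnil
  have h' := congrArg List.length hnil
  rw [List.length_take] at h'
  simp at h' 
  simp [h'] at hlenk

lemma wf_tree_deriv_empty {T : Set (List α)} (hT : IsTree T) (hwf : IsWellFoundedTree T) :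
    ∃ o : Ordinal.{0}, derivIter T o = ∅ := by
  obtain ⟨o, ho⟩ := exists_deriv_fixed T
  refine ⟨o, ?_⟩
  by_contra hne
  rw [derivIter_succ] at ho
  refine no_branch hT (derivIter_antitone T (zero_le (a := o)) |>.trans
    (by rw [derivIter_zero])) ?_ (Set.nonempty_iff_ne_empty.2 hne) hwf
  intro l hl
  rw [← ho] at hl
  exact hl.2


end AuxDeriv

/-- For a tree `R` of finite block sequences with both `R` and the associated
tree `F_R` of min-support sequences well founded, `o(R) ≤ o(F_R)`. -/
theorem statement_3 (X : Type) [NormedAddCommGroup X] [NormedSpace ℝ X]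
    (b : SchauderBasis X) (R : Set (List X)) (hR : IsTree R)
    (hblock : ∀ l ∈ R, l.Chain' b.Before ∧ ∀ x ∈ l, b.IsBlockVector x)
    (hRwf : IsWellFoundedTree R)
    (hFwf : IsWellFoundedTree {l : List ℕ | ∃ r ∈ R, l = r.map b.minSupp}) :
    treeOrder R ≤ treeOrder {l : List ℕ | ∃ r ∈ R, l = r.map b.minSupp} := by
  set F : Set (List ℕ) := {l : List ℕ | ∃ r ∈ R, l = r.map b.minSupp} with hF
  have hFtree : IsTree F := by
    rintro l hl l' hpre hne
    obtain ⟨r, hr, rfl⟩ := hl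
    have h1 : l' = (r.take l'.length).map b.minSupp := by
      rw [List.map_take, ← List.prefix_iff_eq_take.mp hpre]
    refine ⟨r.take l'.length, ?_, h1⟩
    refine hR r hr _ (List.take_prefix _ _) ?_
    intro h0
    apply hne
    rw [h1, h0, List.map_nil]
  have hne' : {o : Ordinal.{0} | derivIter F o = ∅}.Nonempty := by
    obtain ⟨o, ho⟩ := wf_tree_deriv_empty hFtree hFwf
    exact ⟨o, ho⟩
  have hmem : derivIter F (treeOrder F) = ∅ := csInf_mem hne'
  have hR0 : derivIter R (treeOrder F) = ∅ := by
    ext l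
    simp only [Set.mem_empty_iff_false, iff_false]
    intro hl
    have h2 := map_mem_derivIter b.minSupp R (treeOrder F) l hl
    rw [hmem] at h2
    exact h2
  exact csInf_le (OrderBot.bddBelow _) hR0


end HerL1
end
end

section
/- For every block sequence (y_ℓ) in X_ξ, every ε > 0 and every k ≥ m_2, there exists x in the closed linear span of (y_ℓ) which is a normalized 2-ℓ1^k average, i.e. x = (1/k)(x_1 + … + x_k) with x_1 < … < x_k successive blocks, ||x_i|| ≤ 2 for all i and ||x|| = 1. In particular, for every k ∈ ℕ there exists n ∈ ℕ such that for every finite block subsequence (y_{ℓ_i})_{i=1}^n there is a normalized block sequence (z_i)_{i=1}^k of it with ||z_1 + … + z_k|| ≥ k/2. -/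
noncomputable section

open Filter Topology

namespace HerL1

variable {X : Type} [NormedAddCommGroup X] [NormedSpace ℝ X]

/-! ### Shrinking and boundedly complete bases -/

variable {X : Type} [NormedAddCommGroup X] [NormedSpace ℝ X]

/-! ### Auxiliary development for statement 14 -/

section Proof14

open Finset

/-! #### `dot` basics -/

lemma dot_eq_sum (φ x : Func) : dot φ x = ∑ n ∈ φ.support, φ n * x n := rfl

lemma dot_eq_sum_of_subset (φ x : Func) {s : Finset ℕ} (h : φ.support ⊆ s) :
    dot φ x = ∑ n ∈ s, φ n * x n := by
  rw [dot_eq_sum]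
  exact Finset.sum_subset h fun n _ hn => by
    rw [Finsupp.notMem_support_iff.mp hn, zero_mul]

lemma dot_add_right (φ x y : Func) : dot φ (x + y) = dot φ x + dot φ y := by
  simp only [dot_eq_sum, Finsupp.add_apply, mul_add, Finset.sum_add_distrib]

lemma dot_smul_right (φ : Func) (c : ℝ) (x : Func) : dot φ (c • x) = c * dot φ x := by
  simp only [dot_eq_sum, Finsupp.smul_apply, smul_eq_mul, Finset.mul_sum]
  exact Finset.sum_congr rfl fun n _ => by ring

lemma dot_zero_right (φ : Func) : dot φ 0 = 0 := by
  simp [dot_eq_sum]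

lemma dot_sum_right (φ : Func) {ι : Type} (s : Finset ι) (x : ι → Func) :
    dot φ (∑ i ∈ s, x i) = ∑ i ∈ s, dot φ (x i) := by
  classical
  induction s using Finset.induction_on with
  | empty => simp [dot_zero_right]
  | insert _ _ h ih =>
    rw [Finset.sum_insert h, Finset.sum_insert h, dot_add_right, ih]

lemma dot_smul_left (φ : Func) (c : ℝ) (x : Func) : dot (c • φ) x = c * dot φ x := by
  rw [dot_eq_sum_of_subset (c • φ) x (Finsupp.support_smul (b := c) (g := φ)), dot_eq_sum,
    Finset.mul_sum]
  exact Finset.sum_congr rfl fun n _ => by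
    rw [Finsupp.smul_apply, smul_eq_mul]; ring

lemma dot_add_left (φ ψ x : Func) : dot (φ + ψ) x = dot φ x + dot ψ x := by
  rw [dot_eq_sum_of_subset (φ + ψ) x Finsupp.support_add,
    dot_eq_sum_of_subset φ x Finset.subset_union_left,
    dot_eq_sum_of_subset ψ x Finset.subset_union_right, ← Finset.sum_add_distrib]
  exact Finset.sum_congr rfl fun n _ => by rw [Finsupp.add_apply]; ring

lemma dot_sum_left {ι : Type} (s : Finset ι) (φ : ι → Func) (x : Func) :
    dot (∑ i ∈ s, φ i) x = ∑ i ∈ s, dot (φ i) x := by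
  classical
  induction s using Finset.induction_on with
  | empty => simp [dot_eq_sum]
  | insert _ _ h ih =>
    rw [Finset.sum_insert h, Finset.sum_insert h, dot_add_left, ih]

lemma dot_single_left (n : ℕ) (x : Func) : dot (Finsupp.single n 1) x = x n := by
  rw [dot_eq_sum, Finsupp.support_single_ne_zero n one_ne_zero, Finset.sum_singleton,
    Finsupp.single_eq_same, one_mul]

lemma dot_neg_left (φ x : Func) : dot (-φ) x = - dot φ x := by
  rw [dot_eq_sum, dot_eq_sum, Finsupp.support_neg, ← Finset.sum_neg_distrib]
  exact Finset.sum_congr rfl fun n _ => by rw [Finsupp.neg_apply]; ring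

lemma abs_dot_le {φ : Func} (hφ : ∀ n, |φ n| ≤ 1) (x : Func) :
    |dot φ x| ≤ ∑ n ∈ x.support, |x n| := by
  rw [dot_eq_sum]
  calc |∑ n ∈ φ.support, φ n * x n| ≤ ∑ n ∈ φ.support, |φ n * x n| :=
        Finset.abs_sum_le_sum_abs _ _
    _ ≤ ∑ n ∈ φ.support, |x n| := Finset.sum_le_sum fun n _ => by
        rw [abs_mul]; exact mul_le_of_le_one_left (abs_nonneg _) (hφ n)
    _ = ∑ n ∈ φ.support ∩ x.support, |x n| := by
        refine (Finset.sum_subset Finset.inter_subset_left fun n _ hn => ?_).symm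
        have : n ∉ x.support := fun hx => hn (Finset.mem_inter.mpr ⟨‹n ∈ φ.support›, hx⟩)
        rw [Finsupp.notMem_support_iff.mp this, abs_zero]
    _ ≤ ∑ n ∈ x.support, |x n| :=
        Finset.sum_le_sum_of_subset_of_nonneg Finset.inter_subset_right
          fun n _ _ => abs_nonneg _

/-! #### `SuccSupp` basics -/

lemma succSupp_mono {u u' v v' : Func} (hu : u'.support ⊆ u.support)
    (hv : v'.support ⊆ v.support) (h : SuccSupp u v) : SuccSupp u' v' :=
  fun a ha b hb => h a (hu ha) b (hv hb)

lemma succSupp_trans {u v w : Func} (h1 : SuccSupp u v) (h2 : SuccSupp v w) (hv : v ≠ 0) :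
    SuccSupp u w := by
  obtain ⟨n, hn⟩ := Finsupp.support_nonempty_iff.mpr hv
  exact fun a ha b hb => lt_trans (h1 a ha n hn) (h2 n hn b hb)

lemma succSupp_sum_left {ι : Type} {s : Finset ι} {u : ι → Func} {v : Func}
    (h : ∀ i ∈ s, SuccSupp (u i) v) : SuccSupp (∑ i ∈ s, u i) v := by
  intro a ha b hb
  have := Finsupp.support_finset_sum (s := s) (f := u) ha
  obtain ⟨i, hi, hai⟩ := Finset.mem_biUnion.mp this
  exact h i hi a hai b hb

lemma succSupp_sum_right {ι : Type} {s : Finset ι} {u : Func} {v : ι → Func}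
    (h : ∀ i ∈ s, SuccSupp u (v i)) : SuccSupp u (∑ i ∈ s, v i) := by
  intro a ha b hb
  have := Finsupp.support_finset_sum (s := s) (f := v) hb
  obtain ⟨i, hi, hbi⟩ := Finset.mem_biUnion.mp this
  exact h i hi a ha b hbi

lemma succ_chain {y : ℕ → Func} (hy0 : ∀ n, y n ≠ 0)
    (hysucc : ∀ n, SuccSupp (y n) (y (n + 1))) :
    ∀ {a b : ℕ}, a < b → SuccSupp (y a) (y b) := by
  intro a b h
  induction b with
  | zero => omega
  | succ b ih =>
    rcases Nat.lt_succ_iff_lt_or_eq.mp h with h' | h'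
    · exact succSupp_trans (ih h') (hysucc b) (hy0 b)
    · subst h'; exact hysucc a

lemma succ_pairwise_apply {d : ℕ} {f : Fin d → Func}
    (hs : ∀ i₁ i₂ : Fin d, i₁ < i₂ → SuccSupp (f i₁) (f i₂)) (n : ℕ)
    {i₁ i₂ : Fin d} (h1 : f i₁ n ≠ 0) (h2 : f i₂ n ≠ 0) : i₁ = i₂ := by
  by_contra hne
  have m1 : n ∈ (f i₁).support := Finsupp.mem_support_iff.mpr h1
  have m2 : n ∈ (f i₂).support := Finsupp.mem_support_iff.mpr h2
  rcases lt_or_gt_of_ne hne with h | h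
  · exact lt_irrefl n (hs _ _ h n m1 n m2)
  · exact lt_irrefl n (hs _ _ h n m2 n m1)

lemma finsum_apply_eq {d : ℕ} {g : Fin d → Func} {n : ℕ} (i₀ : Fin d)
    (h0 : ∀ i, i ≠ i₀ → g i n = 0) : (∑ i, g i) n = g i₀ n := by
  rw [Finsupp.finset_sum_apply]
  exact Finset.sum_eq_single_of_mem i₀ (Finset.mem_univ _) fun b _ hb => h0 b hb

lemma abs_sum_apply_le {d : ℕ} {f : Fin d → Func}
    (hs : ∀ i₁ i₂ : Fin d, i₁ < i₂ → SuccSupp (f i₁) (f i₂)) {c : ℝ} (hc : 0 ≤ c)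
    (hb : ∀ i n, |f i n| ≤ c) (n : ℕ) : |(∑ i, f i) n| ≤ c := by
  by_cases he : ∃ i, f i n ≠ 0
  · obtain ⟨i₀, hi₀⟩ := he
    rw [finsum_apply_eq i₀ fun i hne => by
      by_contra h; exact hne (succ_pairwise_apply hs n h hi₀)]
    exact hb i₀ n
  · push_neg at he
    rw [Finsupp.finset_sum_apply, Finset.sum_eq_zero fun i _ => he i, abs_zero]
    exact hc

lemma sum_ne_zero_of_succ {s : Finset ℕ} {w : ℕ → Func} (hne : s.Nonempty)
    (h0 : ∀ t ∈ s, w t ≠ 0)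
    (hs : ∀ t₁ ∈ s, ∀ t₂ ∈ s, t₁ < t₂ → SuccSupp (w t₁) (w t₂)) :
    (∑ t ∈ s, w t) ≠ 0 := by
  obtain ⟨t₀, ht₀⟩ := hne
  obtain ⟨n, hn⟩ := Finsupp.support_nonempty_iff.mpr (h0 t₀ ht₀)
  have hn0 : w t₀ n ≠ 0 := Finsupp.mem_support_iff.mp hn
  have hval : (∑ t ∈ s, w t) n = w t₀ n := by
    rw [Finsupp.finset_sum_apply]
    refine Finset.sum_eq_single_of_mem t₀ ht₀ fun b hb hbne => ?_
    by_contra hb0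
    have hnb : n ∈ (w b).support := Finsupp.mem_support_iff.mpr hb0
    rcases lt_or_gt_of_ne hbne with h' | h'
    · exact lt_irrefl n (hs b hb t₀ ht₀ h' n hnb n hn)
    · exact lt_irrefl n (hs t₀ ht₀ b hb h' n hn n hnb)
  intro hzero
  rw [hzero] at hval
  exact hn0 (by simpa using hval.symm)

/-! #### `restrictTo` basics -/

lemma restrictTo_apply_mem {E : Set ℕ} {n : ℕ} (g : Func) (h : n ∈ E) :
    restrictTo E g n = g n := by
  unfold restrictTo
  rw [Finsupp.filter_apply, if_pos h]

lemma restrictTo_apply_not_mem {E : Set ℕ} {n : ℕ} (g : Func) (h : n ∉ E) :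
    restrictTo E g n = 0 := by
  unfold restrictTo
  rw [Finsupp.filter_apply, if_neg h]

lemma restrictTo_support (E : Set ℕ) (g : Func) :
    (restrictTo E g).support ⊆ g.support := by
  intro n hn
  rw [Finsupp.mem_support_iff] at hn ⊢
  by_cases h : n ∈ E
  · rwa [restrictTo_apply_mem g h] at hn
  · exact absurd (restrictTo_apply_not_mem g h) hn

lemma restrictTo_support_mem {E : Set ℕ} {g : Func} {n : ℕ}
    (hn : n ∈ (restrictTo E g).support) : n ∈ E := by
  by_contra h
  rw [Finsupp.mem_support_iff] at hn
  exact hn (restrictTo_apply_not_mem g h)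

lemma dot_restrict_eq {E : Set ℕ} (φ : Func) {x : Func}
    (h : ∀ n ∈ x.support, n ∈ E) : dot (restrictTo E φ) x = dot φ x := by
  rw [dot_eq_sum_of_subset (restrictTo E φ) x (restrictTo_support E φ), dot_eq_sum]
  refine Finset.sum_congr rfl fun n _ => ?_
  by_cases hE : n ∈ E
  · rw [restrictTo_apply_mem φ hE]
  · have hx : x n = 0 := by
      by_contra hx
      exact hE (h n (Finsupp.mem_support_iff.mpr hx))
    rw [hx, mul_zero, mul_zero]

lemma dot_restrict_eq_zero {E : Set ℕ} (φ : Func) {x : Func}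
    (h : ∀ n ∈ x.support, n ∉ E) : dot (restrictTo E φ) x = 0 := by
  rw [dot_eq_sum_of_subset (restrictTo E φ) x (restrictTo_support E φ)]
  refine Finset.sum_eq_zero fun n _ => ?_
  by_cases hE : n ∈ E
  · have hx : x n = 0 := by
      by_contra hx
      exact h n (Finsupp.mem_support_iff.mpr hx) hE
    rw [hx, mul_zero]
  · rw [restrictTo_apply_not_mem φ hE, zero_mul]

/-! #### numeric facts -/

lemma mseq_pos (t : ℕ) : 0 < mseq t := Nat.pow_pos (by norm_num)

lemma one_le_mseq_real (t : ℕ) : (1 : ℝ) ≤ (mseq t : ℝ) := by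
  have := mseq_pos t
  exact_mod_cast this

lemma mseq_inv_le_one (t : ℕ) : ((mseq t : ℝ))⁻¹ ≤ 1 :=
  inv_le_one_of_one_le₀ (one_le_mseq_real t)

lemma mseq_cast (t : ℕ) : (mseq t : ℝ) = 2 ^ 5 ^ t := by
  rw [mseq]; push_cast; ring

lemma mseq_inv_le_half_pow (t : ℕ) : ((mseq t : ℝ))⁻¹ ≤ (1 / 2 : ℝ) ^ (t + 1) := by
  rw [mseq_cast]
  have h1 : ((2 : ℝ) ^ 5 ^ t)⁻¹ = (1 / 2 : ℝ) ^ 5 ^ t := by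
    rw [one_div, inv_pow]
  rw [h1]
  refine pow_le_pow_of_le_one (by norm_num) (by norm_num) ?_
  have := Nat.lt_pow_self (a := 5) (n := t) (by norm_num)
  omega

lemma mseq_sq_inv_le_half_pow {j : ℕ} (hj : 1 ≤ j) :
    (((mseq (2 * j - 1) : ℝ)) ^ 2)⁻¹ ≤ (1 / 2 : ℝ) ^ (j + 1) := by
  rw [mseq_cast, ← pow_mul]
  have h1 : ((2 : ℝ) ^ (5 ^ (2 * j - 1) * 2))⁻¹ = (1 / 2 : ℝ) ^ (5 ^ (2 * j - 1) * 2) := by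
    rw [one_div, inv_pow]
  rw [h1]
  refine pow_le_pow_of_le_one (by norm_num) (by norm_num) ?_
  have h2 : j < 5 ^ j := Nat.lt_pow_self (by norm_num)
  have h3 : 5 ^ j ≤ 5 ^ (2 * j - 1) := Nat.pow_le_pow_right (by norm_num) (by omega)
  omega

lemma sum_half_pow_le (s : Finset ℕ) : ∑ t ∈ s, ((1 : ℝ) / 2) ^ (t + 1) ≤ 1 := by
  classical
  have hsub : s ⊆ Finset.range (s.sup id + 1) := fun t ht =>
    Finset.mem_range.mpr (Nat.lt_succ_of_le (Finset.le_sup (f := id) ht))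
  calc ∑ t ∈ s, ((1 : ℝ) / 2) ^ (t + 1)
      ≤ ∑ t ∈ Finset.range (s.sup id + 1), ((1 : ℝ) / 2) ^ (t + 1) :=
        Finset.sum_le_sum_of_subset_of_nonneg hsub fun t _ _ => by positivity
    _ = (1 / 2) * ∑ t ∈ Finset.range (s.sup id + 1), ((1 : ℝ) / 2) ^ t := by
        rw [Finset.mul_sum]
        exact Finset.sum_congr rfl fun t _ => by ring
    _ ≤ (1 / 2) * 2 := by
        have := sum_geometric_two_le (s.sup id + 1)
        linarith
    _ = 1 := by norm_num

lemma sum_abs_le_one {d : ℕ} {b : Fin d → ℝ} {J : Fin d → ℕ}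
    (hb : ∀ i, |b i| ≤ ((1 : ℝ) / 2) ^ (J i + 1) ∨ b i = 0)
    (hinj : ∀ i₁ i₂, b i₁ ≠ 0 → b i₂ ≠ 0 → J i₁ = J i₂ → i₁ = i₂) :
    ∑ i, |b i| ≤ 1 := by
  classical
  set s := Finset.univ.filter (fun i => b i ≠ 0) with hs
  have h1 : ∑ i, |b i| = ∑ i ∈ s, |b i| := by
    refine (Finset.sum_subset (Finset.filter_subset _ _) fun i _ hi => ?_).symm
    have : b i = 0 := by
      by_contra h
      exact hi (Finset.mem_filter.mpr ⟨Finset.mem_univ _, h⟩)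
    rw [this, abs_zero]
  rw [h1]
  have h2 : ∑ i ∈ s, |b i| ≤ ∑ i ∈ s, ((1 : ℝ) / 2) ^ (J i + 1) := by
    refine Finset.sum_le_sum fun i hi => ?_
    rcases hb i with h | h
    · exact h
    · exact absurd h (Finset.mem_filter.mp hi).2
  have h3 : ∑ i ∈ s, ((1 : ℝ) / 2) ^ (J i + 1) = ∑ t ∈ s.image J, ((1 : ℝ) / 2) ^ (t + 1) := by
    refine (Finset.sum_image (f := fun t => ((1 : ℝ) / 2) ^ (t + 1)) (g := J) (s := s)
      fun i hi i' hi' hJ => ?_).symm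
    exact hinj i i' (Finset.mem_filter.mp hi).2 (Finset.mem_filter.mp hi').2 hJ
  calc ∑ i ∈ s, |b i| ≤ _ := h2
    _ = _ := h3
    _ ≤ 1 := sum_half_pow_le _

/-! #### the coordinate bound `W1` -/

def W1 : Set Func := {f | ∀ n, |f n| ≤ 1}

lemma aop_coord_bound {N : ℕ} {θ : ℝ} (hθ0 : 0 ≤ θ) {g : Func}
    (h : IsAOp W1 N θ g) (n : ℕ) : |g n| ≤ θ := by
  obtain ⟨d, f, hd0, hdN, hf, hsucc, rfl⟩ := h
  rw [Finsupp.smul_apply, smul_eq_mul, abs_mul, abs_of_nonneg hθ0]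
  calc θ * |(∑ i, f i) n| ≤ θ * 1 :=
        mul_le_mul_of_nonneg_left (abs_sum_apply_le hsucc zero_le_one (fun i m => hf i m) n) hθ0
    _ = θ := mul_one θ

lemma g1_coord {j : ℕ} {φ : Func} (h : φ ∈ G1set j) (n : ℕ) :
    |φ n| ≤ (((mseq (2 * j - 1) : ℝ)) ^ 2)⁻¹ := by
  obtain ⟨B, ε, hB, hε, rfl⟩ := h
  rw [Finsupp.smul_apply, smul_eq_mul, abs_mul,
    abs_of_nonneg (a := (((mseq (2 * j - 1) : ℝ)) ^ 2)⁻¹) (by positivity)]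
  have h2 : |(∑ k ∈ B, ε k • Finsupp.single k (1 : ℝ)) n| ≤ 1 := by
    rw [Finsupp.finset_sum_apply]
    have hcongr : ∀ k ∈ B, (ε k • Finsupp.single k (1 : ℝ)) n = if k = n then ε k else 0 := by
      intro k _
      rw [Finsupp.smul_apply, Finsupp.single_apply]
      split <;> simp
    rw [Finset.sum_congr rfl hcongr, Finset.sum_ite_eq' B n]
    split
    · rcases hε n with h | h <;> rw [h] <;> norm_num
    · norm_num
  calc (((mseq (2 * j - 1) : ℝ)) ^ 2)⁻¹ * |(∑ k ∈ B, ε k • Finsupp.single k (1 : ℝ)) n|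
      ≤ (((mseq (2 * j - 1) : ℝ)) ^ 2)⁻¹ * 1 :=
        mul_le_mul_of_nonneg_left h2 (by positivity)
    _ = _ := mul_one _

lemma weighted_coord {Sch : SchreierSystem} {ξ : Ordinal.{0}} {cd : CodingOne}
    {φ : Func} {I : Set ℕ} (h : WeightedInd Sch ξ cd φ I) (n : ℕ) (hn : φ n ≠ 0) :
    ∃ j ∈ I, 1 ≤ j ∧ |φ n| ≤ (((mseq (2 * j - 1) : ℝ)) ^ 2)⁻¹ := by
  rcases h with ⟨j, hj, hφ, rfl⟩ | hsp
  · exact ⟨j, rfl, hj, g1_coord hφ n⟩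
  · obtain ⟨d, f, jj, ε, E, hspec, hε, hE, rfl, rfl⟩ := hsp
    set g : Fin d → Func := fun i => restrictTo E (ε i • f i) with hg
    have hex : ∃ i₀, g i₀ n ≠ 0 := by
      by_contra h
      push_neg at h
      apply hn
      rw [Finsupp.finset_sum_apply]
      exact Finset.sum_eq_zero fun i _ => h i
    obtain ⟨i₀, hi₀⟩ := hex
    have hmemE : n ∈ E := by
      by_contra hE'
      exact hi₀ (restrictTo_apply_not_mem _ hE')
    have hfval : ∀ i, g i n ≠ 0 → f i n ≠ 0 := by
      intro i hgi
      rw [hg] at hgi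
      simp only [restrictTo_apply_mem _ hmemE, Finsupp.smul_apply, smul_eq_mul] at hgi
      intro h0
      exact hgi (by rw [h0, mul_zero])
    have huniq : ∀ i, i ≠ i₀ → g i n = 0 := by
      intro i hne
      by_contra hgi
      exact hne (succ_pairwise_apply hspec.2.2.1 n (hfval i hgi) (hfval i₀ hi₀))
    refine ⟨jj i₀, ⟨i₀, rfl, ?_⟩, (hspec.2.1 i₀).1, ?_⟩
    · intro hzero
      have : restrictTo E (f i₀) n = 0 := by rw [hzero]; rfl
      rw [restrictTo_apply_mem _ hmemE] at this
      exact hfval i₀ hi₀ this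
    · rw [finsum_apply_eq i₀ huniq, hg]
      simp only [restrictTo_apply_mem _ hmemE, Finsupp.smul_apply, smul_eq_mul]
      have hεabs : |ε i₀| = 1 := by rcases hε i₀ with h | h <;> rw [h] <;> norm_num
      rw [abs_mul, hεabs, one_mul]
      exact g1_coord (hspec.2.1 i₀).2.1 n

lemma abs_le_one_of_sq_le_one {a : ℝ} (h : a ^ 2 ≤ 1) : |a| ≤ 1 := by
  nlinarith [sq_abs a, abs_nonneg a]

lemma mseq_sq_inv_le_one (t : ℕ) : (((mseq t : ℝ)) ^ 2)⁻¹ ≤ 1 := by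
  have := one_le_mseq_real t
  refine inv_le_one_of_one_le₀ ?_
  nlinarith

lemma kclosed_W1 (Sch : SchreierSystem) (ξ : Ordinal.{0}) (cd₁ : CodingOne)
    (cd₂ : CodingTwo) : KClosed Sch ξ cd₁ cd₂ W1 := by
  refine ⟨?_, ?_, ?_, ?_, ?_, ?_, ?_⟩
  · -- Gxi ⊆ W1
    rintro φ (((hφ | hφ) | hφ) | hφ) n
    · rcases hφ with ⟨m, rfl | rfl⟩
      · -- G0
        simp only [Finsupp.single_apply]
        split <;> norm_num
      · simp only [Finsupp.neg_apply, Finsupp.single_apply, abs_neg]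
        split <;> norm_num
    · -- G1all
      obtain ⟨j, hj, hmem⟩ := hφ
      exact (g1_coord hmem n).trans (mseq_sq_inv_le_one _)
    · -- Gsp
      obtain ⟨I, hI⟩ := hφ
      by_cases h0 : φ n = 0
      · rw [h0, abs_zero]; norm_num
      · obtain ⟨j, _, _, hle⟩ := weighted_coord (Or.inr hI) n h0
        exact hle.trans (mseq_sq_inv_le_one _)
    · -- Gl2
      obtain ⟨d, ψ, I, a, hsum, hw, hdisj, rfl⟩ := hφ
      have ha1 : ∀ i, |a i| ≤ 1 := by
        intro i
        refine abs_le_one_of_sq_le_one (le_trans ?_ hsum)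
        exact Finset.single_le_sum (f := fun i => a i ^ 2) (fun i _ => sq_nonneg _)
          (Finset.mem_univ i)
      have hch : ∀ i, ∃ j, ψ i n ≠ 0 → j ∈ I i ∧ |ψ i n| ≤ ((1 : ℝ) / 2) ^ (j + 1) := by
        intro i
        by_cases h : ψ i n = 0
        · exact ⟨0, fun h' => absurd h h'⟩
        · obtain ⟨j, hjI, hj1, hle⟩ := weighted_coord (hw i) n h
          exact ⟨j, fun _ => ⟨hjI, hle.trans (mseq_sq_inv_le_half_pow hj1)⟩⟩
      choose J hJ using hch
      have hstep : |(∑ i, a i • ψ i) n| ≤ ∑ i, |a i * ψ i n| := by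
        rw [Finsupp.finset_sum_apply]
        refine le_trans (Finset.abs_sum_le_sum_abs _ _) (le_of_eq ?_)
        exact Finset.sum_congr rfl fun i _ => by rw [Finsupp.smul_apply, smul_eq_mul]
      refine hstep.trans (sum_abs_le_one (J := J) ?_ ?_)
      · intro i
        by_cases h : ψ i n = 0
        · exact Or.inr (by rw [h, mul_zero])
        · refine Or.inl ?_
          rw [abs_mul]
          calc |a i| * |ψ i n| ≤ 1 * ((1 : ℝ) / 2) ^ (J i + 1) :=
                mul_le_mul (ha1 i) (hJ i h).2 (abs_nonneg _) zero_le_one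
            _ = _ := one_mul _
      · intro i₁ i₂ hb1 hb2 hJeq
        have hψ1 : ψ i₁ n ≠ 0 := fun h => hb1 (by rw [h, mul_zero])
        have hψ2 : ψ i₂ n ≠ 0 := fun h => hb2 (by rw [h, mul_zero])
        by_contra hne
        exact Set.disjoint_left.mp (hdisj i₁ i₂ hne) (hJ i₁ hψ1).1 (hJeq ▸ (hJ i₂ hψ2).1)
  · -- SymmClosed
    intro f hf n
    rw [Finsupp.neg_apply, abs_neg]
    exact hf n
  · -- IntervalClosed
    intro f hf E _ n
    by_cases h : n ∈ E
    · rw [restrictTo_apply_mem f h]; exact hf n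
    · rw [restrictTo_apply_not_mem f h, abs_zero]; norm_num
  · -- even A-operations
    intro j _ g hA n
    exact (aop_coord_bound (by positivity) hA n).trans (mseq_inv_le_one _)
  · -- attractor sequences
    intro j d f hatt n
    rw [Finsupp.smul_apply, smul_eq_mul, abs_mul,
      abs_of_nonneg (a := ((mseq (2 * j - 1) : ℝ))⁻¹) (by positivity)]
    calc ((mseq (2 * j - 1) : ℝ))⁻¹ * |(∑ i, f i) n|
        ≤ ((mseq (2 * j - 1) : ℝ))⁻¹ * 1 :=
          mul_le_mul_of_nonneg_left
            (abs_sum_apply_le hatt.2.2.2.2.1 zero_le_one (fun i m => hatt.2.2.1 i m) n)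
            (by positivity)
      _ ≤ 1 := by rw [mul_one]; exact mseq_inv_le_one _
  · -- L2ComboClosed
    intro d g jj lam hg hne hsum n
    have hlam1 : ∀ i, |(lam i : ℝ)| ≤ 1 := by
      intro i
      refine abs_le_one_of_sq_le_one (le_trans ?_ hsum)
      exact Finset.single_le_sum (f := fun i => (lam i : ℝ) ^ 2) (fun i _ => sq_nonneg _)
        (Finset.mem_univ i)
    have hgb : ∀ i, |g i n| ≤ ((1 : ℝ) / 2) ^ (jj i + 1) :=
      fun i => (aop_coord_bound (by positivity) (hg i).2 n).trans (mseq_inv_le_half_pow _)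
    have hstep : |(∑ i, (lam i : ℝ) • g i) n| ≤ ∑ i, |(lam i : ℝ) * g i n| := by
      rw [Finsupp.finset_sum_apply]
      refine le_trans (Finset.abs_sum_le_sum_abs _ _) (le_of_eq ?_)
      exact Finset.sum_congr rfl fun i _ => by rw [Finsupp.smul_apply, smul_eq_mul]
    refine hstep.trans (sum_abs_le_one (J := jj) ?_ ?_)
    · intro i
      refine Or.inl ?_
      rw [abs_mul]
      calc |(lam i : ℝ)| * |g i n| ≤ 1 * ((1 : ℝ) / 2) ^ (jj i + 1) :=
            mul_le_mul (hlam1 i) (hgb i) (abs_nonneg _) zero_le_one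
        _ = _ := one_mul _
    · intro i₁ i₂ _ _ hJeq
      by_contra hne'
      exact hne i₁ i₂ hne' (by rw [hJeq])
  · -- RatConvex
    intro d g r hg hr hsum n
    have hstep : |(∑ i, (r i : ℝ) • g i) n| ≤ ∑ i, (r i : ℝ) * |g i n| := by
      rw [Finsupp.finset_sum_apply]
      refine le_trans (Finset.abs_sum_le_sum_abs _ _) (le_of_eq ?_)
      refine Finset.sum_congr rfl fun i _ => ?_
      rw [Finsupp.smul_apply, smul_eq_mul, abs_mul, abs_of_nonneg (by exact_mod_cast hr i)]
    refine hstep.trans ?_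
    calc ∑ i, (r i : ℝ) * |g i n| ≤ ∑ i, (r i : ℝ) * 1 :=
          Finset.sum_le_sum fun i _ => mul_le_mul_of_nonneg_left (hg i n)
            (by exact_mod_cast hr i)
      _ = ((∑ i, r i : ℚ) : ℝ) := by push_cast; rw [Finset.sum_congr rfl fun i _ => mul_one _]
      _ = 1 := by rw [hsum]; norm_num

/-! #### facts about `Kxi` and `gNorm` -/

section KFacts

open Pointwise

variable (Sch : SchreierSystem) (ξ : Ordinal.{0}) (cd₁ : CodingOne) (cd₂ : CodingTwo)

lemma mem_kxi_of {f : Func} (h : ∀ W, KClosed Sch ξ cd₁ cd₂ W → f ∈ W) :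
    f ∈ Kxi Sch ξ cd₁ cd₂ :=
  Set.mem_sInter.mpr h

lemma kxi_spec {f : Func} (hf : f ∈ Kxi Sch ξ cd₁ cd₂) {W : Set Func}
    (hW : KClosed Sch ξ cd₁ cd₂ W) : f ∈ W :=
  Set.mem_sInter.mp hf W hW

lemma single_mem_kxi (n : ℕ) : Finsupp.single n 1 ∈ Kxi Sch ξ cd₁ cd₂ :=
  mem_kxi_of Sch ξ cd₁ cd₂ fun _ hW => hW.1 (Or.inl (Or.inl (Or.inl ⟨n, Or.inl rfl⟩)))

lemma neg_single_mem_kxi (n : ℕ) : -Finsupp.single n 1 ∈ Kxi Sch ξ cd₁ cd₂ :=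
  mem_kxi_of Sch ξ cd₁ cd₂ fun _ hW => hW.1 (Or.inl (Or.inl (Or.inl ⟨n, Or.inr rfl⟩)))

lemma kxi_subset_W1 : Kxi Sch ξ cd₁ cd₂ ⊆ W1 :=
  fun _ hf => kxi_spec Sch ξ cd₁ cd₂ hf (kclosed_W1 Sch ξ cd₁ cd₂)

lemma kxi_interval {f : Func} (hf : f ∈ Kxi Sch ξ cd₁ cd₂) (E : Set ℕ)
    (hE : E.OrdConnected) : restrictTo E f ∈ Kxi Sch ξ cd₁ cd₂ :=
  mem_kxi_of Sch ξ cd₁ cd₂ fun _ hW => hW.2.2.1 f (kxi_spec Sch ξ cd₁ cd₂ hf hW) E hE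

lemma isAOp_mono {W W' : Set Func} (h : W ⊆ W') {N : ℕ} {θ : ℝ} {g : Func}
    (hA : IsAOp W N θ g) : IsAOp W' N θ g := by
  obtain ⟨d, f, h1, h2, h3, h4, h5⟩ := hA
  exact ⟨d, f, h1, h2, fun i => h (h3 i), h4, h5⟩

lemma kxi_aop {j : ℕ} (hj : 1 ≤ j) {g : Func}
    (hA : IsAOp (Kxi Sch ξ cd₁ cd₂) (nseq (2 * j)) ((mseq (2 * j) : ℝ))⁻¹ g) :
    g ∈ Kxi Sch ξ cd₁ cd₂ :=
  mem_kxi_of Sch ξ cd₁ cd₂ fun _ hW =>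
    hW.2.2.2.1 j hj g (isAOp_mono (fun _ hf => kxi_spec Sch ξ cd₁ cd₂ hf hW) hA)

lemma kxi_nonempty : (Kxi Sch ξ cd₁ cd₂).Nonempty :=
  ⟨_, single_mem_kxi Sch ξ cd₁ cd₂ 0⟩

lemma bddAbove_dot (x : Func) : BddAbove ((fun φ => dot φ x) '' Kxi Sch ξ cd₁ cd₂) := by
  refine ⟨∑ n ∈ x.support, |x n|, ?_⟩
  rintro r ⟨φ, hφ, rfl⟩
  exact le_trans (le_abs_self _) (abs_dot_le (fun n => kxi_subset_W1 Sch ξ cd₁ cd₂ hφ n) x)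

lemma dot_le_gnorm {φ : Func} (hφ : φ ∈ Kxi Sch ξ cd₁ cd₂) (x : Func) :
    dot φ x ≤ gNorm (Kxi Sch ξ cd₁ cd₂) x :=
  le_csSup (bddAbove_dot Sch ξ cd₁ cd₂ x) (Set.mem_image_of_mem _ hφ)

lemma gnorm_le {x : Func} {c : ℝ} (h : ∀ φ ∈ Kxi Sch ξ cd₁ cd₂, dot φ x ≤ c) :
    gNorm (Kxi Sch ξ cd₁ cd₂) x ≤ c :=
  csSup_le ((kxi_nonempty Sch ξ cd₁ cd₂).image _)
    (by rintro r ⟨φ, hφ, rfl⟩; exact h φ hφ)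

lemma abs_coord_le_gnorm (x : Func) (n : ℕ) : |x n| ≤ gNorm (Kxi Sch ξ cd₁ cd₂) x := by
  have h1 := dot_le_gnorm Sch ξ cd₁ cd₂ (single_mem_kxi Sch ξ cd₁ cd₂ n) x
  have h2 := dot_le_gnorm Sch ξ cd₁ cd₂ (neg_single_mem_kxi Sch ξ cd₁ cd₂ n) x
  rw [dot_single_left] at h1
  rw [dot_neg_left, dot_single_left] at h2
  rcases abs_cases (x n) with ⟨h, _⟩ | ⟨h, _⟩ <;> rw [h] <;> linarith

lemma gnorm_nonneg (x : Func) : 0 ≤ gNorm (Kxi Sch ξ cd₁ cd₂) x :=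
  le_trans (abs_nonneg _) (abs_coord_le_gnorm Sch ξ cd₁ cd₂ x 0)

lemma gnorm_pos {x : Func} (hx : x ≠ 0) : 0 < gNorm (Kxi Sch ξ cd₁ cd₂) x := by
  obtain ⟨n, hn⟩ := Finsupp.support_nonempty_iff.mpr hx
  exact lt_of_lt_of_le (abs_pos.mpr (Finsupp.mem_support_iff.mp hn))
    (abs_coord_le_gnorm Sch ξ cd₁ cd₂ x n)

lemma gnorm_zero : gNorm (Kxi Sch ξ cd₁ cd₂) 0 = 0 :=
  le_antisymm (gnorm_le Sch ξ cd₁ cd₂ fun φ _ => le_of_eq (dot_zero_right φ))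
    (gnorm_nonneg Sch ξ cd₁ cd₂ 0)

lemma gnorm_smul {c : ℝ} (hc : 0 ≤ c) (x : Func) :
    gNorm (Kxi Sch ξ cd₁ cd₂) (c • x) = c * gNorm (Kxi Sch ξ cd₁ cd₂) x := by
  have himg : (fun φ => dot φ (c • x)) '' Kxi Sch ξ cd₁ cd₂
      = c • ((fun φ => dot φ x) '' Kxi Sch ξ cd₁ cd₂) := by
    ext r
    constructor
    · rintro ⟨φ, hφ, rfl⟩
      exact Set.mem_smul_set.mpr ⟨dot φ x, Set.mem_image_of_mem _ hφ,
        by rw [smul_eq_mul, ← dot_smul_right]⟩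
    · rintro hr
      obtain ⟨r', ⟨φ, hφ, rfl⟩, rfl⟩ := Set.mem_smul_set.mp hr
      refine ⟨φ, hφ, ?_⟩
      show dot φ (c • x) = c • dot φ x
      rw [dot_smul_right, smul_eq_mul]
  rw [gNorm, himg, Real.sSup_smul_of_nonneg hc, smul_eq_mul]
  rfl

lemma exists_dot_gt {x : Func} {c : ℝ} (hc : c < gNorm (Kxi Sch ξ cd₁ cd₂) x) :
    ∃ φ ∈ Kxi Sch ξ cd₁ cd₂, c < dot φ x := by
  obtain ⟨r, hr, hcr⟩ := exists_lt_of_lt_csSup ((kxi_nonempty Sch ξ cd₁ cd₂).image _) hc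
  obtain ⟨φ, hφ, rfl⟩ := hr
  exact ⟨φ, hφ, hcr⟩

/-! #### the lower `ℓ1` estimate -/

lemma lower_l1 {j d : ℕ} (hj : 1 ≤ j) (hd0 : 0 < d) (hd : d ≤ nseq (2 * j))
    (u : Fin d → Func) (hu0 : ∀ i, u i ≠ 0)
    (hus : ∀ i₁ i₂ : Fin d, i₁ < i₂ → SuccSupp (u i₁) (u i₂)) :
    ((mseq (2 * j) : ℝ))⁻¹ * ∑ i, gNorm (Kxi Sch ξ cd₁ cd₂) (u i)
      ≤ gNorm (Kxi Sch ξ cd₁ cd₂) (∑ i, u i) := by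
  set K := Kxi Sch ξ cd₁ cd₂ with hK
  set m : ℝ := ((mseq (2 * j) : ℝ))⁻¹ with hm
  have hmq : (0 : ℝ) < (mseq (2 * j) : ℝ) := by exact_mod_cast mseq_pos (2 * j)
  have hm0 : 0 < m := inv_pos.mpr hmq
  refine le_of_forall_pos_le_add fun ε hε => ?_
  have hq : (0 : ℝ) < m * d + 1 := by positivity
  set δ := ε / (m * d + 1) with hδ
  have hδ0 : 0 < δ := by positivity
  have hnear : ∀ i : Fin d, ∃ φ ∈ K, gNorm K (u i) - δ < dot φ (u i) := by
    intro i
    exact exists_dot_gt Sch ξ cd₁ cd₂ (by linarith)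
  choose f hfK hfd using hnear
  have hsupp : ∀ i : Fin d, (u i).support.Nonempty :=
    fun i => Finsupp.support_nonempty_iff.mpr (hu0 i)
  set lo : Fin d → ℕ := fun i => (u i).support.min' (hsupp i) with hlo
  set hi : Fin d → ℕ := fun i => (u i).support.max' (hsupp i) with hhi
  set f' : Fin d → Func := fun i => restrictTo (Set.Icc (lo i) (hi i)) (f i) with hf'
  have hf'K : ∀ i, f' i ∈ K :=
    fun i => kxi_interval Sch ξ cd₁ cd₂ (hfK i) _ Set.ordConnected_Icc
  have hsuppE : ∀ i, ∀ n ∈ (u i).support, n ∈ Set.Icc (lo i) (hi i) := fun i n hn =>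
    ⟨Finset.min'_le _ _ hn, Finset.le_max' _ _ hn⟩
  have hsucc' : ∀ i₁ i₂ : Fin d, i₁ < i₂ → SuccSupp (f' i₁) (f' i₂) := by
    intro i₁ i₂ h a ha b hb
    have ha' : a ≤ hi i₁ := (restrictTo_support_mem ha).2
    have hb' : lo i₂ ≤ b := (restrictTo_support_mem hb).1
    have horder : hi i₁ < lo i₂ :=
      hus i₁ i₂ h (hi i₁) (Finset.max'_mem _ (hsupp i₁)) (lo i₂) (Finset.min'_mem _ (hsupp i₂))
    omega
  have hg : (m • ∑ i, f' i) ∈ K :=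
    kxi_aop Sch ξ cd₁ cd₂ hj ⟨d, f', hd0, hd, hf'K, hsucc', rfl⟩
  have hcross : ∀ i i' : Fin d, i ≠ i' → dot (f' i) (u i') = 0 := by
    intro i i' hne
    refine dot_restrict_eq_zero _ fun n hn => ?_
    rintro ⟨h1, h2⟩
    rcases lt_or_gt_of_ne hne with h | h
    · have h3 : hi i < n := hus i i' h (hi i) (Finset.max'_mem _ (hsupp i)) n hn
      omega
    · have h3 : n < lo i := hus i' i h n hn (lo i) (Finset.min'_mem _ (hsupp i))
      omega
  have hval : dot (m • ∑ i, f' i) (∑ i, u i) = m * ∑ i, dot (f i) (u i) := by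
    rw [dot_smul_left, dot_sum_left]
    congr 1
    refine Finset.sum_congr rfl fun i _ => ?_
    rw [dot_sum_right,
      Finset.sum_eq_single_of_mem i (Finset.mem_univ i) fun b _ hb => hcross i b (Ne.symm hb)]
    exact dot_restrict_eq _ (hsuppE i)
  have hfinal : m * ∑ i, (gNorm K (u i) - δ) ≤ gNorm K (∑ i, u i) :=
    calc m * ∑ i, (gNorm K (u i) - δ) ≤ m * ∑ i, dot (f i) (u i) :=
          mul_le_mul_of_nonneg_left (Finset.sum_le_sum fun i _ => le_of_lt (hfd i)) hm0.le
      _ = dot (m • ∑ i, f' i) (∑ i, u i) := hval.symm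
      _ ≤ gNorm K (∑ i, u i) := dot_le_gnorm Sch ξ cd₁ cd₂ hg _
  have hsum : ∑ i : Fin d, (gNorm K (u i) - δ) = (∑ i, gNorm K (u i)) - d * δ := by
    rw [Finset.sum_sub_distrib, Finset.sum_const, Finset.card_univ, Fintype.card_fin,
      nsmul_eq_mul]
  have hδε : m * (d * δ) ≤ ε := by
    have h1 : m * (d * δ) = ε * ((m * d) / (m * d + 1)) := by
      rw [hδ]; field_simp
    have h2 : (m * d) / (m * d + 1) ≤ 1 := (div_le_one hq).mpr (by linarith)
    calc m * (d * δ) = ε * ((m * d) / (m * d + 1)) := h1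
      _ ≤ ε * 1 := mul_le_mul_of_nonneg_left h2 hε.le
      _ = ε := mul_one ε
  have hexp : m * ((∑ i, gNorm K (u i)) - d * δ) = m * (∑ i, gNorm K (u i)) - m * (d * δ) := by
    ring
  rw [hsum, hexp] at hfinal
  linarith

end KFacts

/-! #### growth of `nseq` -/

lemma nseq_succ_def (t : ℕ) : nseq (t + 2) = (2 * nseq (t + 1)) ^ (3 * 5 ^ (t + 2)) := rfl

lemma nseq_one_pos : 0 < nseq 1 := by norm_num [nseq]

lemma two_pow_le_nseq (t : ℕ) : 2 ^ (t + 1) ≤ nseq (t + 1) := by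
  induction t with
  | zero => norm_num [nseq]
  | succ t ih =>
    have h1 : 2 * nseq (t + 1) ≤ (2 * nseq (t + 1)) ^ (3 * 5 ^ (t + 2)) :=
      Nat.le_self_pow (by positivity) _
    calc 2 ^ (t + 2) = 2 * 2 ^ (t + 1) := by ring
      _ ≤ 2 * nseq (t + 1) := by omega
      _ ≤ nseq (t + 2) := by rw [nseq_succ_def]; exact h1

lemma exists_good_j (k : ℕ) : ∃ j, 1 ≤ j ∧ k ≤ nseq (2 * j - 1) := by
  refine ⟨k + 1, by omega, ?_⟩
  have h1 : 2 * (k + 1) - 1 = 2 * k + 1 := by omega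
  rw [h1]
  have h2 := two_pow_le_nseq (2 * k)
  have h3 : k < 2 ^ k := Nat.lt_two_pow_self
  have h4 : 2 ^ k ≤ 2 ^ (2 * k + 1) := Nat.pow_le_pow_right (by norm_num) (by omega)
  omega

lemma pow_le_nseq {k j : ℕ} (hj : 1 ≤ j) (hk : k ≤ nseq (2 * j - 1)) :
    k ^ (3 * 5 ^ (2 * j)) ≤ nseq (2 * j) := by
  obtain ⟨j', rfl⟩ : ∃ j', j = j' + 1 := ⟨j - 1, by omega⟩
  have h1 : 2 * (j' + 1) - 1 = 2 * j' + 1 := by omega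
  rw [h1] at hk
  have h2 : 2 * (j' + 1) = 2 * j' + 2 := by ring
  rw [h2, nseq_succ_def]
  exact Nat.pow_le_pow_left (hk.trans (Nat.le_mul_of_pos_left _ (by norm_num))) _

lemma mseq_lt_pow (j : ℕ) : (mseq (2 * j) : ℝ) < ((4 : ℝ) / 3) ^ (3 * 5 ^ (2 * j)) := by
  rw [mseq_cast]
  calc (2 : ℝ) ^ 5 ^ (2 * j) < ((64 : ℝ) / 27) ^ 5 ^ (2 * j) :=
        pow_lt_pow_left₀ (by norm_num) (by norm_num) (by positivity)
    _ = ((4 : ℝ) / 3) ^ (3 * 5 ^ (2 * j)) := by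
        rw [pow_mul ((4 : ℝ) / 3) 3 (5 ^ (2 * j))]
        congr 1
        norm_num

lemma sum_grouped {M : Type} [AddCommMonoid M] (F : ℕ → M) (m P : ℕ) (c : ℕ) :
    ∑ t ∈ Finset.range c, ∑ r ∈ Finset.Ico ((m + t) * P) ((m + t + 1) * P), F r
      = ∑ r ∈ Finset.Ico (m * P) ((m + c) * P), F r := by
  induction c with
  | zero => simp
  | succ c ih =>
    have hle1 : m * P ≤ (m + c) * P := Nat.mul_le_mul_right _ (by omega)
    have hle2 : (m + c) * P ≤ (m + c + 1) * P := Nat.mul_le_mul_right _ (by omega)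
    calc ∑ t ∈ Finset.range (c + 1), ∑ r ∈ Finset.Ico ((m + t) * P) ((m + t + 1) * P), F r
        = (∑ r ∈ Finset.Ico (m * P) ((m + c) * P), F r)
          + ∑ r ∈ Finset.Ico ((m + c) * P) ((m + c + 1) * P), F r := by
          rw [Finset.sum_range_succ, ih]
      _ = ∑ r ∈ Finset.Ico (m * P) ((m + c + 1) * P), F r :=
          Finset.sum_Ico_consecutive F hle1 hle2

/-! #### the main averaging lemma -/

lemma main_L (Sch : SchreierSystem) (ξ : Ordinal.{0}) (cd₁ : CodingOne) (cd₂ : CodingTwo)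
    {k j : ℕ} (hk1 : 1 ≤ k) (hj : 1 ≤ j) (hkn : k ≤ nseq (2 * j - 1))
    {N : ℕ} (hN : N = k ^ (3 * 5 ^ (2 * j)))
    (v : Fin N → Func) (hv0 : ∀ t, v t ≠ 0)
    (hvs : ∀ t₁ t₂ : Fin N, t₁ < t₂ → SuccSupp (v t₁) (v t₂)) :
    ∃ x : Fin k → Func, (∀ i, x i ∈ Submodule.span ℝ (Set.range v)) ∧
      (∀ i₁ i₂ : Fin k, i₁ < i₂ → SuccSupp (x i₁) (x i₂)) ∧
      ∃ B : ℝ, 0 < B ∧ (∀ i, gNorm (Kxi Sch ξ cd₁ cd₂) (x i) ≤ B) ∧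
        (3 / 4 : ℝ) * k * B ≤ gNorm (Kxi Sch ξ cd₁ cd₂) (∑ i, x i) := by
  classical
  have hkR : (0 : ℝ) < (k : ℝ) := by exact_mod_cast hk1
  by_contra hcon
  push_neg at hcon
  set w : ℕ → Func :=
    fun t => if h : t < N then (gNorm (Kxi Sch ξ cd₁ cd₂) (v ⟨t, h⟩))⁻¹ • v ⟨t, h⟩ else 0
    with hwdef
  have hw0 : ∀ t, t < N → w t ≠ 0 := by
    intro t h
    simp only [hwdef, dif_pos h]
    exact smul_ne_zero (inv_ne_zero (gnorm_pos Sch ξ cd₁ cd₂ (hv0 ⟨t, h⟩)).ne') (hv0 _)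
  have hwn : ∀ t, t < N → gNorm (Kxi Sch ξ cd₁ cd₂) (w t) = 1 := by
    intro t h
    simp only [hwdef, dif_pos h]
    rw [gnorm_smul Sch ξ cd₁ cd₂
      (inv_nonneg.mpr (gnorm_nonneg Sch ξ cd₁ cd₂ (v ⟨t, h⟩))) (v ⟨t, h⟩)]
    exact inv_mul_cancel₀ (gnorm_pos Sch ξ cd₁ cd₂ (hv0 ⟨t, h⟩)).ne'
  have hwsucc : ∀ t₁ t₂ : ℕ, t₁ < t₂ → SuccSupp (w t₁) (w t₂) := by
    intro t₁ t₂ h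
    by_cases h2 : t₂ < N
    · by_cases h1 : t₁ < N
      · simp only [hwdef, dif_pos h1, dif_pos h2]
        exact succSupp_mono Finsupp.support_smul Finsupp.support_smul
          (hvs ⟨t₁, h1⟩ ⟨t₂, h2⟩ h)
      · simp only [hwdef, dif_neg h1]
        intro a ha
        simp at ha
    · simp only [hwdef, dif_neg h2]
      intro a ha b hb
      simp at hb
  have hwspan : ∀ t, w t ∈ Submodule.span ℝ (Set.range v) := by
    intro t
    by_cases h : t < N
    · simp only [hwdef, dif_pos h]
      exact Submodule.smul_mem _ _ (Submodule.subset_span (Set.mem_range_self _))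
    · simp only [hwdef, dif_neg h]
      exact Submodule.zero_mem _
  have key : ∀ s i : ℕ, (i + 1) * k ^ s ≤ N →
      gNorm (Kxi Sch ξ cd₁ cd₂) (∑ t ∈ Finset.Ico (i * k ^ s) ((i + 1) * k ^ s), w t)
        ≤ ((3 / 4 : ℝ) * k) ^ s := by
    intro s
    induction s with
    | zero =>
      intro i hi
      simp only [pow_zero, mul_one] at hi ⊢
      rw [Nat.Ico_succ_singleton, Finset.sum_singleton]
      exact le_of_eq (hwn i (by omega))
    | succ s ih =>
      intro i hi
      have hksucc : k ^ (s + 1) = k ^ s * k := pow_succ k s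
      set z : Fin k → Func :=
        fun t => ∑ r ∈ Finset.Ico ((i * k + t.1) * k ^ s) ((i * k + t.1 + 1) * k ^ s), w r
        with hzdef
      have hbound : ∀ t : ℕ, t < k → (i * k + t + 1) * k ^ s ≤ N := by
        intro t ht
        have h1 : i * k + t + 1 ≤ (i + 1) * k := by nlinarith
        calc (i * k + t + 1) * k ^ s ≤ (i + 1) * k * k ^ s := Nat.mul_le_mul_right _ h1
          _ = (i + 1) * k ^ (s + 1) := by rw [hksucc]; ring
          _ ≤ N := hi
      have hzsum : ∑ t, z t
          = ∑ r ∈ Finset.Ico (i * k ^ (s + 1)) ((i + 1) * k ^ (s + 1)), w r := by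
        simp only [hzdef]
        rw [Fin.sum_univ_eq_sum_range
          (fun t => ∑ r ∈ Finset.Ico ((i * k + t) * k ^ s) ((i * k + t + 1) * k ^ s), w r) k]
        rw [sum_grouped w (i * k) (k ^ s) k]
        have e1 : (i * k) * k ^ s = i * k ^ (s + 1) := by rw [hksucc]; ring
        have e2 : (i * k + k) * k ^ s = (i + 1) * k ^ (s + 1) := by rw [hksucc]; ring
        rw [e1, e2]
      have hzspan : ∀ t, z t ∈ Submodule.span ℝ (Set.range v) :=
        fun t => Submodule.sum_mem _ fun r _ => hwspan r
      have hzsucc : ∀ t₁ t₂ : Fin k, t₁ < t₂ → SuccSupp (z t₁) (z t₂) := by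
        intro t₁ t₂ h
        refine succSupp_sum_left fun r₁ hr₁ => succSupp_sum_right fun r₂ hr₂ => ?_
        rw [Finset.mem_Ico] at hr₁ hr₂
        refine hwsucc r₁ r₂ ?_
        have hlt : t₁.1 + 1 ≤ t₂.1 := h
        have hmul : (i * k + t₁.1 + 1) * k ^ s ≤ (i * k + t₂.1) * k ^ s :=
          Nat.mul_le_mul_right _ (by omega)
        omega
      have hlt := hcon z hzspan hzsucc (((3 / 4 : ℝ) * k) ^ s)
        (pow_pos (mul_pos (by norm_num) hkR) s)
        (fun t => ih (i * k + t.1) (hbound t.1 t.2))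
      calc gNorm (Kxi Sch ξ cd₁ cd₂)
            (∑ r ∈ Finset.Ico (i * k ^ (s + 1)) ((i + 1) * k ^ (s + 1)), w r)
          = gNorm (Kxi Sch ξ cd₁ cd₂) (∑ t, z t) := by rw [hzsum]
        _ ≤ (3 / 4 : ℝ) * k * ((3 / 4 : ℝ) * k) ^ s := hlt.le
        _ = ((3 / 4 : ℝ) * k) ^ (s + 1) := by rw [pow_succ]; ring
  have hNpos : 0 < N := by
    rw [hN]
    exact Nat.pow_pos (by omega)
  have hcond : (0 + 1) * k ^ (3 * 5 ^ (2 * j)) ≤ N := by rw [hN]; ring_nf; exact le_rfl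
  have hup := key (3 * 5 ^ (2 * j)) 0 hcond
  have e1 : 0 * k ^ (3 * 5 ^ (2 * j)) = 0 := by ring
  have e2 : (0 + 1) * k ^ (3 * 5 ^ (2 * j)) = N := by rw [hN]; ring
  rw [e1, e2, ← Finset.range_eq_Ico] at hup
  have hdle : N ≤ nseq (2 * j) := by
    rw [hN]
    exact pow_le_nseq hj hkn
  have hlow := lower_l1 Sch ξ cd₁ cd₂ hj hNpos hdle
    (fun t : Fin N => w t.1) (fun t => hw0 t.1 t.2) (fun t₁ t₂ h => hwsucc t₁.1 t₂.1 h)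
  have hsum1 : ∑ t : Fin N, gNorm (Kxi Sch ξ cd₁ cd₂) (w t.1) = (N : ℝ) := by
    rw [Finset.sum_congr rfl fun t _ => hwn t.1 t.2]
    simp
  have hsum2 : ∑ t : Fin N, w t.1 = ∑ t ∈ Finset.range N, w t :=
    Fin.sum_univ_eq_sum_range w N
  rw [hsum1, hsum2] at hlow
  have hNcast : ((N : ℕ) : ℝ) = (k : ℝ) ^ (3 * 5 ^ (2 * j)) := by rw [hN]; push_cast; ring
  have hchain : ((mseq (2 * j) : ℝ))⁻¹ * (N : ℝ)
      ≤ ((3 : ℝ) / 4) ^ (3 * 5 ^ (2 * j)) * (N : ℝ) := by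
    calc ((mseq (2 * j) : ℝ))⁻¹ * (N : ℝ)
        ≤ gNorm (Kxi Sch ξ cd₁ cd₂) (∑ t ∈ Finset.range N, w t) := hlow
      _ ≤ ((3 / 4 : ℝ) * k) ^ (3 * 5 ^ (2 * j)) := hup
      _ = ((3 : ℝ) / 4) ^ (3 * 5 ^ (2 * j)) * (N : ℝ) := by rw [mul_pow, hNcast]
  have hNr : (0 : ℝ) < (N : ℝ) := by exact_mod_cast hNpos
  have h1 : ((mseq (2 * j) : ℝ))⁻¹ ≤ ((3 : ℝ) / 4) ^ (3 * 5 ^ (2 * j)) :=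
    le_of_mul_le_mul_right hchain hNr
  have h2 : (mseq (2 * j) : ℝ) < ((4 : ℝ) / 3) ^ (3 * 5 ^ (2 * j)) := mseq_lt_pow j
  have hm0 : (0 : ℝ) < (mseq (2 * j) : ℝ) := by exact_mod_cast mseq_pos _
  have h5 : 1 ≤ (mseq (2 * j) : ℝ) * ((3 : ℝ) / 4) ^ (3 * 5 ^ (2 * j)) := by
    have := mul_le_mul_of_nonneg_left h1 hm0.le
    rwa [mul_inv_cancel₀ hm0.ne'] at this
  have h6 : (mseq (2 * j) : ℝ) * ((3 : ℝ) / 4) ^ (3 * 5 ^ (2 * j))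
      < ((4 : ℝ) / 3) ^ (3 * 5 ^ (2 * j)) * ((3 : ℝ) / 4) ^ (3 * 5 ^ (2 * j)) :=
    mul_lt_mul_of_pos_right h2 (pow_pos (by norm_num) _)
  have h7 : ((4 : ℝ) / 3) ^ (3 * 5 ^ (2 * j)) * ((3 : ℝ) / 4) ^ (3 * 5 ^ (2 * j)) = 1 := by
    rw [← mul_pow]
    norm_num
  linarith

/-! #### the normalized version -/

lemma main_M (Sch : SchreierSystem) (ξ : Ordinal.{0}) (cd₁ : CodingOne) (cd₂ : CodingTwo)
    {k j : ℕ} (hk1 : 1 ≤ k) (hj : 1 ≤ j) (hkn : 2 * k + 1 ≤ nseq (2 * j - 1))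
    {N : ℕ} (hN : N = (2 * k + 1) ^ (3 * 5 ^ (2 * j)))
    (v : Fin N → Func) (hv0 : ∀ t, v t ≠ 0)
    (hvs : ∀ t₁ t₂ : Fin N, t₁ < t₂ → SuccSupp (v t₁) (v t₂)) :
    ∃ z : Fin k → Func, (∀ i, z i ∈ Submodule.span ℝ (Set.range v)) ∧
      (∀ i₁ i₂ : Fin k, i₁ < i₂ → SuccSupp (z i₁) (z i₂)) ∧
      (∀ i, gNorm (Kxi Sch ξ cd₁ cd₂) (z i) = 1) ∧
      (k : ℝ) / 2 ≤ gNorm (Kxi Sch ξ cd₁ cd₂) (∑ i, z i) := by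
  classical
  obtain ⟨x, hxspan, hxsucc, B, hB0, hBle, hxineq⟩ :=
    main_L Sch ξ cd₁ cd₂ (k := 2 * k + 1) (by omega) hj hkn hN v hv0 hvs
  have hKk : ((2 * k + 1 : ℕ) : ℝ) = 2 * (k : ℝ) + 1 := by push_cast; ring
  have hlow : (3 / 4 : ℝ) * (2 * (k : ℝ) + 1) * B - B / 4
      < gNorm (Kxi Sch ξ cd₁ cd₂) (∑ i, x i) := by
    rw [hKk] at hxineq
    linarith
  obtain ⟨f, hfK, hf⟩ := exists_dot_gt Sch ξ cd₁ cd₂ hlow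
  have hdots : dot f (∑ i, x i) = ∑ i, dot f (x i) := dot_sum_right f Finset.univ x
  rw [hdots] at hf
  set G := Finset.univ.filter (fun i : Fin (2 * k + 1) => B / 2 < dot f (x i)) with hG
  have hcard : k < G.card := by
    by_contra hc
    push_neg at hc
    have hcR : (G.card : ℝ) ≤ (k : ℝ) := by exact_mod_cast hc
    set G' := Finset.univ.filter (fun i : Fin (2 * k + 1) => ¬ (B / 2 < dot f (x i))) with hG'
    have hsplit : (∑ i ∈ G, dot f (x i)) + (∑ i ∈ G', dot f (x i)) = ∑ i, dot f (x i) :=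
      Finset.sum_filter_add_sum_filter_not _ _ _
    have hub1 : ∑ i ∈ G, dot f (x i) ≤ (G.card : ℝ) * B := by
      have := Finset.sum_le_card_nsmul G (fun i => dot f (x i)) B
        (fun i _ => le_trans (dot_le_gnorm Sch ξ cd₁ cd₂ hfK (x i)) (hBle i))
      rwa [nsmul_eq_mul] at this
    have hub2 : ∑ i ∈ G', dot f (x i) ≤ (G'.card : ℝ) * (B / 2) := by
      have := Finset.sum_le_card_nsmul G' (fun i => dot f (x i)) (B / 2)
        (fun i hi => le_of_not_gt (Finset.mem_filter.mp hi).2)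
      rwa [nsmul_eq_mul] at this
    have hcc : (G.card : ℝ) + (G'.card : ℝ) = 2 * (k : ℝ) + 1 := by
      have h := Finset.card_filter_add_card_filter_not
        (s := Finset.univ) (p := fun i : Fin (2 * k + 1) => B / 2 < dot f (x i))
      rw [Finset.card_univ, Fintype.card_fin] at h
      exact_mod_cast congrArg (fun t : ℕ => (t : ℝ)) h
    have hc2B : (G'.card : ℝ) * B = (2 * (k : ℝ) + 1) * B - (G.card : ℝ) * B := by
      rw [← hcc]; ring
    have hbc : (G.card : ℝ) * B ≤ (k : ℝ) * B :=
      mul_le_mul_of_nonneg_right hcR hB0.le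
    linarith
  set e := G.orderEmbOfCardLe (le_of_lt hcard) with he
  have hmem : ∀ i : Fin k, e i ∈ G := fun i => Finset.orderEmbOfCardLe_mem _ _ i
  have hdotB : ∀ i : Fin k, B / 2 < dot f (x (e i)) :=
    fun i => (Finset.mem_filter.mp (hmem i)).2
  have hd0 : ∀ i : Fin k, 0 < dot f (x (e i)) :=
    fun i => lt_trans (by positivity) (hdotB i)
  have hgn : ∀ i : Fin k, 0 < gNorm (Kxi Sch ξ cd₁ cd₂) (x (e i)) :=
    fun i => lt_of_lt_of_le (hd0 i) (dot_le_gnorm Sch ξ cd₁ cd₂ hfK _)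
  refine ⟨fun i => (gNorm (Kxi Sch ξ cd₁ cd₂) (x (e i)))⁻¹ • x (e i), ?_, ?_, ?_, ?_⟩
  · exact fun i => Submodule.smul_mem _ _ (hxspan (e i))
  · intro i₁ i₂ h
    exact succSupp_mono Finsupp.support_smul Finsupp.support_smul
      (hxsucc _ _ (e.strictMono h))
  · intro i
    rw [gnorm_smul Sch ξ cd₁ cd₂ (inv_nonneg.mpr (hgn i).le)]
    exact inv_mul_cancel₀ (hgn i).ne'
  · have hhalf : ∀ i : Fin k,
        (1 / 2 : ℝ) ≤ dot f ((gNorm (Kxi Sch ξ cd₁ cd₂) (x (e i)))⁻¹ • x (e i)) := by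
      intro i
      rw [dot_smul_right]
      have hinvle : B⁻¹ ≤ (gNorm (Kxi Sch ξ cd₁ cd₂) (x (e i)))⁻¹ :=
        inv_anti₀ (hgn i) (hBle (e i))
      calc (1 / 2 : ℝ) = B⁻¹ * (B / 2) := by field_simp
        _ ≤ B⁻¹ * dot f (x (e i)) :=
            mul_le_mul_of_nonneg_left (hdotB i).le (inv_nonneg.mpr hB0.le)
        _ ≤ (gNorm (Kxi Sch ξ cd₁ cd₂) (x (e i)))⁻¹ * dot f (x (e i)) :=
            mul_le_mul_of_nonneg_right hinvle (hd0 i).le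
    have hsumhalf : (k : ℝ) / 2
        ≤ ∑ i : Fin k, dot f ((gNorm (Kxi Sch ξ cd₁ cd₂) (x (e i)))⁻¹ • x (e i)) := by
      have := Finset.card_nsmul_le_sum Finset.univ
        (fun i : Fin k => dot f ((gNorm (Kxi Sch ξ cd₁ cd₂) (x (e i)))⁻¹ • x (e i)))
        ((1 : ℝ) / 2) (fun i _ => hhalf i)
      rw [Finset.card_univ, Fintype.card_fin, nsmul_eq_mul] at this
      calc (k : ℝ) / 2 = (k : ℝ) * (1 / 2) := by ring
        _ ≤ _ := this
    calc (k : ℝ) / 2 ≤ _ := hsumhalf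
      _ = dot f (∑ i : Fin k, (gNorm (Kxi Sch ξ cd₁ cd₂) (x (e i)))⁻¹ • x (e i)) :=
          (dot_sum_right f Finset.univ _).symm
      _ ≤ gNorm (Kxi Sch ξ cd₁ cd₂) (∑ i : Fin k, (gNorm (Kxi Sch ξ cd₁ cd₂) (x (e i)))⁻¹ • x (e i)) :=
          dot_le_gnorm Sch ξ cd₁ cd₂ hfK _

end Proof14

/-- Every block sequence of `X_ξ` supports, for every `ε > 0` and every
`k ≥ m_2`, a normalized `2-ℓ1^k` average; in particular suitable long block subsequences
always contain `k` normalized blocks whose sum has norm at least `k/2`. -/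
theorem statement_14 (Sch : SchreierSystem) (ξ : Ordinal.{0}) (hξ : ξ.card ≤ Cardinal.aleph0)
    (cd₁ : CodingOne) (cd₂ : CodingTwo)
    (y : ℕ → Func) (hy0 : ∀ n, y n ≠ 0) (hysucc : ∀ n, SuccSupp (y n) (y (n + 1))) :
    (∀ ε : ℝ, 0 < ε → ∀ k : ℕ, mseq 2 ≤ k →
      ∃ x : Fin k → Func, (∀ i, x i ∈ Submodule.span ℝ (Set.range y)) ∧
        (∀ i₁ i₂ : Fin k, i₁ < i₂ → SuccSupp (x i₁) (x i₂)) ∧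
        (∀ i, gNorm (Kxi Sch ξ cd₁ cd₂) (x i) ≤ 2) ∧
        gNorm (Kxi Sch ξ cd₁ cd₂) ((k : ℝ)⁻¹ • ∑ i, x i) = 1) ∧
    (∀ k : ℕ, ∃ n : ℕ, ∀ ℓ : Fin n → ℕ, StrictMono ℓ →
      ∃ z : Fin k → Func,
        (∀ i, z i ∈ Submodule.span ℝ (Set.range fun t : Fin n => y (ℓ t))) ∧
        (∀ i₁ i₂ : Fin k, i₁ < i₂ → SuccSupp (z i₁) (z i₂)) ∧
        (∀ i, gNorm (Kxi Sch ξ cd₁ cd₂) (z i) = 1) ∧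
        (k : ℝ) / 2 ≤ gNorm (Kxi Sch ξ cd₁ cd₂) (∑ i, z i)) := by
  constructor
  · -- 2-ℓ1^k averages
    intro ε hε k hk
    have hk1 : 1 ≤ k := le_trans (mseq_pos 2) hk
    have hkR : (0 : ℝ) < (k : ℝ) := by exact_mod_cast hk1
    obtain ⟨j, hj, hkn⟩ := exists_good_j k
    obtain ⟨x', hspan, hsucc, B, hB0, hBle, hineq⟩ :=
      main_L Sch ξ cd₁ cd₂ hk1 hj hkn rfl
        (fun t : Fin (k ^ (3 * 5 ^ (2 * j))) => y t.1)
        (fun t => hy0 t.1) (fun t₁ t₂ h => succ_chain hy0 hysucc (show t₁.1 < t₂.1 from h))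
    have hSpos : 0 < gNorm (Kxi Sch ξ cd₁ cd₂) (∑ i, x' i) :=
      lt_of_lt_of_le (mul_pos (mul_pos (show (0:ℝ) < 3/4 by norm_num) hkR) hB0) hineq
    set g := gNorm (Kxi Sch ξ cd₁ cd₂) (∑ i, x' i) with hg
    set c := (k : ℝ)⁻¹ * g with hc
    have hcpos : 0 < c := mul_pos (inv_pos.mpr hkR) hSpos
    have hcB : 3 / 4 * B ≤ c := by
      rw [hc]
      have h1 : (k : ℝ)⁻¹ * ((3 / 4 : ℝ) * k * B) = 3 / 4 * B := by field_simp
      calc (3 / 4 : ℝ) * B = (k : ℝ)⁻¹ * ((3 / 4 : ℝ) * k * B) := h1.symm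
        _ ≤ (k : ℝ)⁻¹ * g := mul_le_mul_of_nonneg_left hineq (inv_nonneg.mpr hkR.le)
    refine ⟨fun i => c⁻¹ • x' i, ?_, ?_, ?_, ?_⟩
    · intro i
      refine Submodule.smul_mem _ _ ?_
      refine Submodule.span_mono ?_ (hspan i)
      rintro _ ⟨t, rfl⟩
      exact ⟨t.1, rfl⟩
    · intro i₁ i₂ h
      exact succSupp_mono Finsupp.support_smul Finsupp.support_smul (hsucc i₁ i₂ h)
    · intro i
      show gNorm (Kxi Sch ξ cd₁ cd₂) (c⁻¹ • x' i) ≤ 2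
      rw [gnorm_smul Sch ξ cd₁ cd₂ (inv_nonneg.mpr hcpos.le)]
      have h2 : c⁻¹ * gNorm (Kxi Sch ξ cd₁ cd₂) (x' i) ≤ c⁻¹ * B :=
        mul_le_mul_of_nonneg_left (hBle i) (inv_nonneg.mpr hcpos.le)
      have h3 : c⁻¹ ≤ ((3 / 4 : ℝ) * B)⁻¹ := inv_anti₀ (by positivity) hcB
      have h4 : c⁻¹ * B ≤ ((3 / 4 : ℝ) * B)⁻¹ * B := mul_le_mul_of_nonneg_right h3 hB0.le
      have h5 : ((3 / 4 : ℝ) * B)⁻¹ * B = 4 / 3 := by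
        rw [mul_inv]
        field_simp
      linarith
    · show gNorm (Kxi Sch ξ cd₁ cd₂) ((k : ℝ)⁻¹ • ∑ i : Fin k, c⁻¹ • x' i) = 1
      have hsmul : ∑ i : Fin k, c⁻¹ • x' i = c⁻¹ • ∑ i, x' i := (Finset.smul_sum).symm
      rw [hsmul, smul_smul, gnorm_smul Sch ξ cd₁ cd₂
        (mul_nonneg (inv_nonneg.mpr hkR.le) (inv_nonneg.mpr hcpos.le)), ← hg, hc]
      have hg0 : g ≠ 0 := hSpos.ne'
      have hk0 : (k : ℝ) ≠ 0 := hkR.ne'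
      field_simp
  · -- normalized blocks with large sums
    intro k
    rcases Nat.eq_zero_or_pos k with rfl | hk1
    · refine ⟨0, fun ℓ _ => ⟨fun i => i.elim0, fun i => i.elim0, fun i => i.elim0, ?_⟩⟩
      rw [Finset.univ_eq_empty, Finset.sum_empty, gnorm_zero Sch ξ cd₁ cd₂]
      norm_num
    · obtain ⟨j, hj, hkn⟩ := exists_good_j (2 * k + 1)
      refine ⟨(2 * k + 1) ^ (3 * 5 ^ (2 * j)), fun ℓ hℓ => ?_⟩
      exact main_M Sch ξ cd₁ cd₂ hk1 hj hkn rfl (fun t => y (ℓ t))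
        (fun t => hy0 _) (fun t₁ t₂ h => succ_chain hy0 hysucc (hℓ h))


end HerL1
end
end
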